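/- arXiv:2202.07216 — 8 statements merged into one kernel-verified Lean document; each statement's English description precedes it below -/
import Mathlib

section
/- Let f : [0,1]^n → [0,1] be continuous and polynomially bounded, and let L = {p ∈ [0,1]^n : f(p) ≤ 3/8}. Then for every q ∈ L there exist a radius r_q > 0 and an integer t_q such that for all p ∈ L with ‖p − q‖_∞ < r_q and all integers t ≥ t_q it holds that f(p) − (1/4)·P_p[f(X̄_t) ≥ 1/2] ≥ (1/8)·f(p). -/
open Finset

def cube (n : ℕ) : Set (Fin n → ℝ) := {p | ∀ i, 0 ≤ p i ∧ p i ≤ 1}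

/-- The open face `F_{A,S,B}` of the hypercube, where `S` is the complement of `A ∪ B`. -/
def face {n : ℕ} (A B : Finset (Fin n)) : Set (Fin n → ℝ) :=
  {p | (∀ i ∈ A, p i = 0) ∧ (∀ i ∈ B, p i = 1) ∧ ∀ i ∉ A ∪ B, 0 < p i ∧ p i < 1}

/-- `(1-p)^A · (p(1-p))^S · p^B` for the face `F_{A,S,B}`. -/
noncomputable def facePoly {n : ℕ} (A B : Finset (Fin n)) (p : Fin n → ℝ) : ℝ :=
  (∏ i ∈ A, (1 - p i)) * (∏ i ∈ (A ∪ B)ᶜ, p i * (1 - p i)) * (∏ i ∈ B, p i)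
/-- A function `f : [0,1]^n → [0,1]` is polynomially bounded. -/
def PolyBounded {n : ℕ} (f : (Fin n → ℝ) → ℝ) : Prop :=
  ∃ (m : ℕ) (c : ℝ), 0 < c ∧ ∀ A B : Finset (Fin n), Disjoint A B →
    (¬ ∀ q ∈ face A B, f q = 0) →
    ∀ p ∈ cube n, c * facePoly A B p ^ m ≤ f p
/-- Probability weight of a realization `x` of `t` flips of the `n` coins `p`. -/
noncomputable def flipWeight {n t : ℕ} (p : Fin n → ℝ) (x : Fin t → Fin n → Bool) : ℝ :=
  ∏ s, ∏ i, if x s i then p i else 1 - p i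

/-- `P_p[E]`, the probability of the event `E` for `t` i.i.d. flips of the `n` coins `p`. -/
noncomputable def coinProb {n : ℕ} (t : ℕ) (p : Fin n → ℝ)
    (E : Set (Fin t → Fin n → Bool)) : ℝ :=
  ∑ x : Fin t → Fin n → Bool, Set.indicator E (flipWeight p) x

/-- The empirical average `X̄_t` of the coin flips `x`. -/
noncomputable def empAvg {n : ℕ} (t : ℕ) (x : Fin t → Fin n → Bool) : Fin n → ℝ :=
  fun i => (∑ s, if x s i then (1 : ℝ) else 0) / t

lemma sum_prod_eq {ι κ : Type*} [Fintype ι] [DecidableEq ι] [Fintype κ] (g : ι → κ → ℝ) :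
    ∑ z : ι → κ, ∏ i, g i (z i) = ∏ i, ∑ b, g i b := by
  rw [Finset.prod_univ_sum]
  rw [Fintype.piFinset_univ]

noncomputable def colWeight {t : ℕ} (p : ℝ) (c : Fin t → Bool) : ℝ :=
  ∏ s, if c s then p else 1 - p

def cnt {t : ℕ} (c : Fin t → Bool) : ℕ := ∑ s, if c s then 1 else 0

noncomputable def colProb {t : ℕ} (p : ℝ) (D : Set (Fin t → Bool)) : ℝ :=
  ∑ c, Set.indicator D (colWeight p) c

lemma colWeight_nonneg {t : ℕ} {p : ℝ} (h0 : 0 ≤ p) (h1 : p ≤ 1) (c : Fin t → Bool) :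
    0 ≤ colWeight p c := by
  apply Finset.prod_nonneg; intro s _; split <;> linarith

lemma sum_colWeight {t : ℕ} (p : ℝ) : ∑ c : Fin t → Bool, colWeight p c = 1 := by
  unfold colWeight
  have h := sum_prod_eq (ι := Fin t) (κ := Bool) (fun _ b => if b then p else 1 - p)
  rw [h]
  simp

lemma colWeight_eq {t : ℕ} (p : ℝ) (c : Fin t → Bool) :
    colWeight p c = p ^ (cnt c) * (1 - p) ^ (t - cnt c) := by
  classical
  unfold colWeight cnt
  rw [Finset.prod_ite (fun _ => p) (fun _ => 1 - p)]
  simp only [Finset.prod_const]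
  congr 1
  · congr 1; rw [Finset.card_filter]
  · congr 1
    have h1 : (Finset.univ.filter (fun s => ¬ c s = true)).card
        = t - (Finset.univ.filter (fun s => c s = true)).card := by
      rw [Finset.filter_not, Finset.card_sdiff_of_subset (Finset.filter_subset _ _)]
      simp
    rw [h1, Finset.card_filter]

lemma colProb_nonneg {t : ℕ} {p : ℝ} (h0 : 0 ≤ p) (h1 : p ≤ 1) (D : Set (Fin t → Bool)) :
    0 ≤ colProb p D := by
  apply Finset.sum_nonneg; intro c _
  exact Set.indicator_nonneg (fun c _ => colWeight_nonneg h0 h1 c) c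

lemma colProb_mono {t : ℕ} {p : ℝ} (h0 : 0 ≤ p) (h1 : p ≤ 1) {D D' : Set (Fin t → Bool)}
    (h : D ⊆ D') : colProb p D ≤ colProb p D' := by
  apply Finset.sum_le_sum; intro c _
  classical
  simp only [Set.indicator_apply]
  by_cases hc : c ∈ D
  · rw [if_pos hc, if_pos (h hc)]
  · rw [if_neg hc]
    split
    · exact colWeight_nonneg h0 h1 c
    · exact le_refl _

lemma colProb_le_one {t : ℕ} {p : ℝ} (h0 : 0 ≤ p) (h1 : p ≤ 1) (D : Set (Fin t → Bool)) :
    colProb p D ≤ 1 := by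
  calc colProb p D ≤ colProb p Set.univ := colProb_mono h0 h1 (Set.subset_univ D)
  _ = 1 := by unfold colProb; simp [sum_colWeight]

lemma colProb_head_tail {t : ℕ} {p : ℝ} (h0 : 0 ≤ p) (h1 : p ≤ 1) (h : ℕ)
    {D : Set (Fin t → Bool)} (hD : ∀ c ∈ D, h ≤ cnt c) :
    colProb p D ≤ 2 ^ t * p ^ h := by
  classical
  have key : ∀ c : Fin t → Bool, Set.indicator D (colWeight p) c ≤ p ^ h := by
    intro c
    rw [Set.indicator_apply]
    split
    case isTrue hc =>
      rw [colWeight_eq]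
      calc p ^ cnt c * (1 - p) ^ (t - cnt c) ≤ p ^ cnt c * 1 := by
            apply mul_le_mul_of_nonneg_left _ (pow_nonneg h0 _)
            exact pow_le_one₀ (by linarith) (by linarith)
      _ = p ^ cnt c := mul_one _
      _ ≤ p ^ h := pow_le_pow_of_le_one h0 h1 (hD c hc)
    case isFalse => exact pow_nonneg h0 _
  calc colProb p D ≤ ∑ _c : Fin t → Bool, p ^ h := Finset.sum_le_sum (fun c _ => key c)
  _ = 2 ^ t * p ^ h := by simp [Finset.card_univ]

lemma colProb_tail_tail {t : ℕ} {p : ℝ} (h0 : 0 ≤ p) (h1 : p ≤ 1) (h : ℕ)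
    {D : Set (Fin t → Bool)} (hD : ∀ c ∈ D, h ≤ t - cnt c) :
    colProb p D ≤ 2 ^ t * (1 - p) ^ h := by
  classical
  have key : ∀ c : Fin t → Bool, Set.indicator D (colWeight p) c ≤ (1 - p) ^ h := by
    intro c
    rw [Set.indicator_apply]
    split
    case isTrue hc =>
      rw [colWeight_eq]
      calc p ^ cnt c * (1 - p) ^ (t - cnt c) ≤ 1 * (1 - p) ^ (t - cnt c) := by
            apply mul_le_mul_of_nonneg_right _ (pow_nonneg (by linarith) _)
            exact pow_le_one₀ h0 h1
      _ = (1 - p) ^ (t - cnt c) := one_mul _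
      _ ≤ (1 - p) ^ h := pow_le_pow_of_le_one (by linarith) (by linarith) (hD c hc)
    case isFalse => exact pow_nonneg (by linarith) _
  calc colProb p D ≤ ∑ _c : Fin t → Bool, (1 - p) ^ h := Finset.sum_le_sum (fun c _ => key c)
  _ = 2 ^ t * (1 - p) ^ h := by simp [Finset.card_univ]
lemma col_var {t : ℕ} (p : ℝ) :
    ∑ c : Fin t → Bool, colWeight p c * ((cnt c : ℝ) - t * p) ^ 2 = t * (p * (1 - p)) := by
  classical
  set d : Bool → ℝ := fun b => (if b then (1:ℝ) else 0) - p with hd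
  have hsum : ∀ c : Fin t → Bool, ((cnt c : ℝ) - t * p) = ∑ s, d (c s) := by
    intro c
    simp only [hd, Finset.sum_sub_distrib, Finset.sum_const, Finset.card_univ,
      Fintype.card_fin, nsmul_eq_mul]
    congr 1
    unfold cnt
    push_cast
    congr 1
  have key : ∀ s s' : Fin t,
      (∑ c : Fin t → Bool, colWeight p c * (d (c s) * d (c s')))
        = if s = s' then p * (1 - p) else 0 := by
    intro s s'
    set G : Fin t → Bool → ℝ := fun u b =>
      (if b then p else 1 - p) * ((if u = s then d b else 1) * (if u = s' then d b else 1))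
      with hG
    have hpt : ∀ c : Fin t → Bool, colWeight p c * (d (c s) * d (c s'))
        = ∏ u, G u (c u) := by
      intro c
      simp only [hG]
      rw [Finset.prod_mul_distrib, Finset.prod_mul_distrib]
      congr 1
      simp [Finset.prod_ite_eq']
    rw [Finset.sum_congr rfl (fun c _ => hpt c), sum_prod_eq]
    by_cases hss : s = s'
    · subst hss
      rw [if_pos rfl]
      rw [Finset.prod_eq_single s]
      · simp only [hG, if_pos rfl]
        simp [Fintype.sum_bool, hd]
        ring
      · intro u _ hu
        simp only [hG, if_neg hu]
        simp [Fintype.sum_bool]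
      · intro h; exact absurd (Finset.mem_univ s) h
    · rw [if_neg hss]
      apply Finset.prod_eq_zero (Finset.mem_univ s)
      simp only [hG, if_pos rfl, if_neg hss]
      simp [Fintype.sum_bool, hd]
      ring
  calc ∑ c : Fin t → Bool, colWeight p c * ((cnt c : ℝ) - t * p) ^ 2
      = ∑ c : Fin t → Bool, ∑ s, ∑ s', colWeight p c * (d (c s) * d (c s')) := by
        apply Finset.sum_congr rfl
        intro c _
        rw [hsum c, sq, Finset.sum_mul_sum]
        rw [Finset.mul_sum]
        apply Finset.sum_congr rfl
        intro s _
        rw [Finset.mul_sum]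
    _ = ∑ s, ∑ s', ∑ c : Fin t → Bool, colWeight p c * (d (c s) * d (c s')) := by
        rw [Finset.sum_comm]
        apply Finset.sum_congr rfl
        intro s _
        rw [Finset.sum_comm]
    _ = ∑ s : Fin t, ∑ s' : Fin t, if s = s' then p * (1 - p) else 0 := by
        apply Finset.sum_congr rfl; intro s _
        apply Finset.sum_congr rfl; intro s' _
        exact key s s'
    _ = t * (p * (1 - p)) := by
        simp [Finset.sum_ite_eq, Finset.card_univ]
lemma colProb_cheb {t : ℕ} {p η : ℝ} (h0 : 0 ≤ p) (h1 : p ≤ 1) (hη : 0 < η) (ht : 1 ≤ t)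
    {D : Set (Fin t → Bool)} (hD : ∀ c ∈ D, (t : ℝ) * η ≤ |(cnt c : ℝ) - t * p|) :
    colProb p D ≤ 1 / (4 * t * η ^ 2) := by
  classical
  have htpos : (0:ℝ) < t := by exact_mod_cast Nat.lt_of_lt_of_le Nat.zero_lt_one ht
  have hmain : ((t:ℝ) * η) ^ 2 * colProb p D ≤ (t : ℝ) * (1/4) := by
    calc ((t:ℝ) * η) ^ 2 * colProb p D
        = ∑ c : Fin t → Bool, ((t:ℝ)*η)^2 * Set.indicator D (colWeight p) c := by
          unfold colProb; rw [Finset.mul_sum]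
      _ ≤ ∑ c : Fin t → Bool, colWeight p c * ((cnt c : ℝ) - t * p) ^ 2 := by
          apply Finset.sum_le_sum
          intro c _
          rw [Set.indicator_apply]
          split
          case isTrue hc =>
            rw [mul_comm]
            apply mul_le_mul_of_nonneg_left _ (colWeight_nonneg h0 h1 c)
            calc ((t:ℝ)*η)^2 ≤ |(cnt c : ℝ) - t * p| ^ 2 := by
                  apply pow_le_pow_left₀ (by positivity) (hD c hc)
              _ = ((cnt c : ℝ) - t * p) ^ 2 := sq_abs _
          case isFalse =>
            have := colWeight_nonneg h0 h1 c
            rw [mul_zero]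
            positivity
      _ = (t:ℝ) * (p * (1 - p)) := col_var p
      _ ≤ (t:ℝ) * (1/4) := by
          have : p * (1 - p) ≤ 1/4 := by nlinarith [sq_nonneg (p - 1/2)]
          nlinarith
  have h2 : colProb p D ≤ ((t:ℝ) * (1/4)) / (((t:ℝ)*η)^2) := by
    rw [le_div_iff₀ (by positivity)]
    linarith [hmain]
  calc colProb p D ≤ ((t:ℝ) * (1/4)) / (((t:ℝ)*η)^2) := h2
    _ = 1 / (4 * t * η ^ 2) := by field_simp
def col {n t : ℕ} (i : Fin n) (x : Fin t → Fin n → Bool) : Fin t → Bool := fun s => x s i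

lemma flipWeight_eq {n t : ℕ} (p : Fin n → ℝ) (x : Fin t → Fin n → Bool) :
    flipWeight p x = ∏ i, colWeight (p i) (col i x) := Finset.prod_comm

lemma flipWeight_nonneg {n t : ℕ} {p : Fin n → ℝ} (hp : ∀ i, 0 ≤ p i ∧ p i ≤ 1)
    (x : Fin t → Fin n → Bool) : 0 ≤ flipWeight p x := by
  rw [flipWeight_eq]
  exact Finset.prod_nonneg fun i _ => colWeight_nonneg (hp i).1 (hp i).2 _

lemma coinProb_factor {n t : ℕ} (p : Fin n → ℝ) (D : Fin n → Set (Fin t → Bool)) :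
    coinProb t p {x | ∀ i, col i x ∈ D i} = ∏ i, colProb (p i) (D i) := by
  classical
  unfold coinProb colProb
  have hpt : ∀ x : Fin t → Fin n → Bool,
      Set.indicator {x | ∀ i, col i x ∈ D i} (flipWeight p) x
        = ∏ i, Set.indicator (D i) (colWeight (p i)) (col i x) := by
    intro x
    rw [Set.indicator_apply]
    simp only [Set.mem_setOf_eq]
    by_cases hx : ∀ i, col i x ∈ D i
    · rw [if_pos hx, flipWeight_eq]
      apply Finset.prod_congr rfl; intro i _
      rw [Set.indicator_apply, if_pos (hx i)]
    · rw [if_neg hx]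
      push_neg at hx; obtain ⟨i0, hi0⟩ := hx
      symm
      apply Finset.prod_eq_zero (Finset.mem_univ i0)
      rw [Set.indicator_apply, if_neg hi0]
  rw [Finset.sum_congr rfl (fun x _ => hpt x)]
  exact (Fintype.sum_equiv (Equiv.piComm (fun (_ : Fin t) (_ : Fin n) => Bool))
    _ (fun z => ∏ i, Set.indicator (D i) (colWeight (p i)) (z i)) (fun x => rfl)).trans
    (sum_prod_eq _)

lemma coinProb_univ {n t : ℕ} (p : Fin n → ℝ) : coinProb t p Set.univ = 1 := by
  have h : (Set.univ : Set (Fin t → Fin n → Bool)) = {x | ∀ i, col i x ∈ Set.univ} := by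
    ext x; simp
  rw [h, coinProb_factor]
  apply Finset.prod_eq_one
  intro i _
  unfold colProb
  simp [sum_colWeight]

lemma coinProb_nonneg {n t : ℕ} {p : Fin n → ℝ} (hp : ∀ i, 0 ≤ p i ∧ p i ≤ 1)
    (E : Set (Fin t → Fin n → Bool)) : 0 ≤ coinProb t p E :=
  Finset.sum_nonneg fun x _ => Set.indicator_nonneg (fun x _ => flipWeight_nonneg hp x) x

lemma coinProb_mono {n t : ℕ} {p : Fin n → ℝ} (hp : ∀ i, 0 ≤ p i ∧ p i ≤ 1)
    {E E' : Set (Fin t → Fin n → Bool)} (h : E ⊆ E') : coinProb t p E ≤ coinProb t p E' := by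
  apply Finset.sum_le_sum; intro x _
  classical
  simp only [Set.indicator_apply]
  by_cases hx : x ∈ E
  · rw [if_pos hx, if_pos (h hx)]
  · rw [if_neg hx]
    split
    · exact flipWeight_nonneg hp x
    · exact le_refl _

lemma coinProb_col {n t : ℕ} (p : Fin n → ℝ) (i : Fin n) (D : Set (Fin t → Bool)) :
    coinProb t p {x | col i x ∈ D} = colProb (p i) D := by
  classical
  have h : {x : Fin t → Fin n → Bool | col i x ∈ D}
      = {x | ∀ j, col j x ∈ (if j = i then D else Set.univ)} := by
    ext x
    simp only [Set.mem_setOf_eq]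
    constructor
    · intro hx j
      by_cases hj : j = i
      · subst hj; rw [if_pos rfl]; exact hx
      · rw [if_neg hj]; trivial
    · intro hx
      have := hx i
      rwa [if_pos rfl] at this
  rw [h, coinProb_factor]
  rw [Finset.prod_eq_single i]
  · rw [if_pos rfl]
  · intro j _ hj
    rw [if_neg hj]
    unfold colProb
    simp [sum_colWeight]
  · intro h; exact absurd (Finset.mem_univ i) h

lemma coinProb_partition {n t : ℕ} (p : Fin n → ℝ) (E : Set (Fin t → Fin n → Bool))
    (pt : (Fin t → Fin n → Bool) → Finset (Fin n) × Finset (Fin n)) :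
    coinProb t p E = ∑ AB : Finset (Fin n) × Finset (Fin n),
      coinProb t p (E ∩ {x | pt x = AB}) := by
  classical
  unfold coinProb
  rw [Finset.sum_comm]
  apply Finset.sum_congr rfl
  intro x _
  have h : ∀ AB, Set.indicator (E ∩ {x | pt x = AB}) (flipWeight p) x
      = if pt x = AB then Set.indicator E (flipWeight p) x else 0 := by
    intro AB
    simp only [Set.indicator_apply, Set.mem_inter_iff, Set.mem_setOf_eq]
    by_cases h1 : pt x = AB <;> by_cases h2 : x ∈ E <;> simp [h1, h2]
  rw [Finset.sum_congr rfl (fun AB _ => h AB), Finset.sum_ite_eq]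
  simp
lemma cube_compact (n : ℕ) : IsCompact (cube n) := by
  have h : cube n = Set.pi Set.univ (fun _ : Fin n => Set.Icc (0:ℝ) 1) := by
    ext y; simp only [cube, Set.mem_setOf_eq, Set.mem_univ_pi, Set.mem_Icc]
  rw [h]
  exact isCompact_univ_pi fun i => isCompact_Icc

lemma K_compact {n : ℕ} (f : (Fin n → ℝ) → ℝ) (hcont : ContinuousOn f (cube n)) :
    IsCompact {y | y ∈ cube n ∧ 1/2 ≤ f y} := by
  have h : {y | y ∈ cube n ∧ 1/2 ≤ f y} = cube n ∩ f ⁻¹' (Set.Ici (1/2)) := by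
    ext y; simp [Set.mem_Ici, and_comm]
  rw [h]
  exact (cube_compact n).of_isClosed_subset
    (hcont.preimage_isClosed_of_isClosed (cube_compact n).isClosed isClosed_Ici)
    Set.inter_subset_left

lemma face_zero_closure {n : ℕ} (f : (Fin n → ℝ) → ℝ) (hcont : ContinuousOn f (cube n))
    (A B : Finset (Fin n)) (hd : Disjoint A B) (hz : ∀ z ∈ face A B, f z = 0)
    {y : Fin n → ℝ} (hy : y ∈ cube n) (hA : ∀ i ∈ A, y i = 0) (hB : ∀ i ∈ B, y i = 1) :
    f y = 0 := by
  classical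
  have habs : ∀ ε > 0, |f y| < ε := by
    intro ε hε
    have hcw : ContinuousWithinAt f (cube n) y := hcont y hy
    rw [Metric.continuousWithinAt_iff] at hcw
    obtain ⟨δ, hδ, hδ'⟩ := hcw ε hε
    set θ := min (δ/2) (1/4) with hθdef
    have hθpos : 0 < θ := by positivity
    have hθ14 : θ ≤ 1/4 := min_le_right _ _
    have hθδ : θ < δ := lt_of_le_of_lt (min_le_left _ _) (by linarith)
    set z : Fin n → ℝ := fun i => if i ∈ A then 0 else if i ∈ B then 1
      else min (max (y i) θ) (1-θ) with hzdef
    have hzcube : z ∈ cube n := by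
      intro i
      simp only [hzdef]
      split
      · norm_num
      · split
        · norm_num
        · constructor
          · have h1 : θ ≤ max (y i) θ := le_max_right _ _
            have : θ ≤ min (max (y i) θ) (1-θ) := le_min h1 (by linarith)
            linarith
          · have : min (max (y i) θ) (1-θ) ≤ 1 - θ := min_le_right _ _
            linarith
    have hzface : z ∈ face A B := by
      refine ⟨fun i hi => ?_, fun i hi => ?_, fun i hi => ?_⟩
      · simp only [hzdef]; rw [if_pos hi]
      · simp only [hzdef]
        rw [if_neg (Finset.disjoint_right.mp hd hi), if_pos hi]
      · rw [Finset.mem_union, not_or] at hi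
        simp only [hzdef]
        rw [if_neg hi.1, if_neg hi.2]
        constructor
        · have h1 : θ ≤ max (y i) θ := le_max_right _ _
          have : θ ≤ min (max (y i) θ) (1-θ) := le_min h1 (by linarith)
          linarith
        · have : min (max (y i) θ) (1-θ) ≤ 1 - θ := min_le_right _ _
          linarith
    have hdist : dist z y < δ := by
      rw [dist_pi_lt_iff hδ]
      intro i
      rw [Real.dist_eq]
      have hyi := hy i
      simp only [hzdef]
      split
      case isTrue hi => rw [hA i hi]; simpa using hδ
      case isFalse hi =>
        split
        case isTrue hi' => rw [hB i hi']; simpa using hδ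
        case isFalse hi' =>
          have key : |min (max (y i) θ) (1-θ) - y i| ≤ θ := by
            rcases le_or_gt (y i) θ with h1 | h1
            · rw [max_eq_right h1, min_eq_left (by linarith)]
              rw [abs_of_nonneg (by linarith)]; linarith
            · rw [max_eq_left h1.le]
              rcases le_or_gt (y i) (1-θ) with h2 | h2
              · rw [min_eq_left h2]; simp [hθpos.le]
              · rw [min_eq_right h2.le, abs_of_nonpos (by linarith)]
                linarith [hyi.2]
          linarith
    have := hδ' hzcube hdist
    rw [hz z hzface] at this
    rwa [dist_zero_left] at this
  by_contra h
  have h1 : 0 < |f y| := abs_pos.mpr h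
  exact absurd (habs _ h1) (lt_irrefl _)
lemma cnt_le {t : ℕ} (c : Fin t → Bool) : cnt c ≤ t := by
  unfold cnt
  calc ∑ s, (if c s then 1 else 0) ≤ ∑ _s : Fin t, 1 := by
        apply Finset.sum_le_sum; intro s _; split <;> omega
    _ = t := by simp

lemma empAvg_cnt {n t : ℕ} (x : Fin t → Fin n → Bool) (i : Fin n) :
    empAvg t x i = (cnt (col i x) : ℝ) / t := by
  unfold empAvg cnt col
  congr 1
  push_cast
  apply Finset.sum_congr rfl
  intro s _
  split <;> norm_num

lemma empAvg_cube {n t : ℕ} (ht : 1 ≤ t) (x : Fin t → Fin n → Bool) :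
    empAvg t x ∈ cube n := by
  intro i
  rw [empAvg_cnt]
  have h1 : (0:ℝ) < t := by exact_mod_cast ht
  constructor
  · positivity
  · rw [div_le_one h1]
    exact_mod_cast cnt_le (col i x)

lemma half_pow_le_inv {t : ℕ} (ht : 1 ≤ t) : ((1:ℝ)/2) ^ t ≤ (t:ℝ)⁻¹ := by
  have h1 : (0:ℝ) < t := by exact_mod_cast ht
  rw [div_pow, one_pow]
  rw [div_le_iff₀ (by positivity), inv_mul_eq_div, le_div_iff₀ h1]
  have := Nat.lt_two_pow_self (n := t)
  have h2 : (t:ℝ) < 2 ^ t := by exact_mod_cast this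
  linarith

lemma coinProb_empty {n t : ℕ} (p : Fin n → ℝ) : coinProb t p ∅ = 0 := by
  unfold coinProb; simp

lemma coinProb_union_le {n t : ℕ} {p : Fin n → ℝ} (hp : ∀ i, 0 ≤ p i ∧ p i ≤ 1)
    {E : Set (Fin t → Fin n → Bool)} {E' : Fin n → Set (Fin t → Fin n → Bool)}
    (hcov : ∀ x ∈ E, ∃ i, x ∈ E' i) :
    coinProb t p E ≤ ∑ i, coinProb t p (E' i) := by
  classical
  unfold coinProb
  rw [Finset.sum_comm]
  apply Finset.sum_le_sum
  intro x _
  by_cases hx : x ∈ E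
  · obtain ⟨i, hi⟩ := hcov x hx
    calc Set.indicator E (flipWeight p) x = flipWeight p x := Set.indicator_of_mem hx _
      _ = Set.indicator (E' i) (flipWeight p) x := (Set.indicator_of_mem hi _).symm
      _ ≤ ∑ i, Set.indicator (E' i) (flipWeight p) x := by
          apply Finset.single_le_sum (f := fun i => Set.indicator (E' i) (flipWeight p) x)
            (fun j _ => Set.indicator_nonneg (fun y _ => flipWeight_nonneg hp y) x)
            (Finset.mem_univ i)
  · rw [Set.indicator_of_notMem hx]
    apply Finset.sum_nonneg
    intro j _
    exact Set.indicator_nonneg (fun y _ => flipWeight_nonneg hp y) x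

lemma facePoly_eq {n : ℕ} (A B : Finset (Fin n)) (hd : Disjoint A B) (p : Fin n → ℝ) :
    facePoly A B p
      = ∏ i, (if i ∈ A then 1 - p i else if i ∈ B then p i else p i * (1 - p i)) := by
  classical
  set φ : Fin n → ℝ := fun i => if i ∈ A then 1 - p i else if i ∈ B then p i
    else p i * (1 - p i) with hφ
  have h1 : ∏ i ∈ A, (1 - p i) = ∏ i ∈ A, φ i :=
    Finset.prod_congr rfl fun i hi => by simp [hφ, hi]
  have h2 : ∏ i ∈ B, p i = ∏ i ∈ B, φ i :=
    Finset.prod_congr rfl fun i hi => by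
      simp [hφ, hi, Finset.disjoint_right.mp hd hi]
  have h3 : ∏ i ∈ (A ∪ B)ᶜ, (p i * (1 - p i)) = ∏ i ∈ (A ∪ B)ᶜ, φ i :=
    Finset.prod_congr rfl fun i hi => by
      rw [Finset.mem_compl, Finset.mem_union, not_or] at hi
      simp [hφ, hi.1, hi.2]
  unfold facePoly
  rw [h1, h2, h3]
  rw [← Finset.prod_mul_prod_compl (A ∪ B) φ, Finset.prod_union hd]
  ring

lemma small_tail_head {t m Nb : ℕ} {p r β : ℝ} (h0 : 0 ≤ p) (hpr : p ≤ r)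
    (hr0 : 0 < r) (hr1 : r ≤ 1) (hrN : r ≤ (1/4) ^ Nb) (hβ : 0 < β) (hNb : 1/β ≤ Nb)
    (hmt : (m:ℝ) ≤ β * t) (ht : 1 ≤ t)
    {D : Set (Fin t → Bool)} (hD : ∀ c ∈ D, β * t ≤ (cnt c : ℝ)) :
    colProb p D ≤ p ^ m * (1/r) ^ m * (t:ℝ)⁻¹ := by
  set h : ℕ := ⌈β * t⌉₊ with hh
  have hmh : m ≤ h := by
    have : (m:ℝ) ≤ ⌈β * t⌉₊ := le_trans hmt (Nat.le_ceil _)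
    exact_mod_cast this
  have htNh : t ≤ Nb * h := by
    have h1 : (t:ℝ) ≤ (Nb:ℝ) * h := by
      have h2 : β * t ≤ (h:ℝ) := Nat.le_ceil _
      have h3 : 1 ≤ β * Nb := by
        have := mul_le_mul_of_nonneg_left hNb hβ.le
        rwa [mul_one_div, div_self hβ.ne'] at this
      calc (t:ℝ) = 1 * t := (one_mul _).symm
        _ ≤ (β * Nb) * t := by
            apply mul_le_mul_of_nonneg_right h3 (by positivity)
        _ = (Nb:ℝ) * (β * t) := by ring
        _ ≤ (Nb:ℝ) * h := by
            apply mul_le_mul_of_nonneg_left h2 (by positivity)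
    exact_mod_cast h1
  have hp1 : p ≤ 1 := le_trans hpr hr1
  have step1 : colProb p D ≤ 2 ^ t * p ^ h := by
    apply colProb_head_tail h0 hp1 h
    intro c hc
    rw [hh, Nat.ceil_le]
    exact hD c hc
  have step2 : p ^ h ≤ p ^ m * r ^ (h - m) := by
    have : p ^ h = p ^ m * p ^ (h - m) := by
      rw [← pow_add]
      congr 1
      omega
    rw [this]
    apply mul_le_mul_of_nonneg_left _ (pow_nonneg h0 _)
    exact pow_le_pow_left₀ h0 hpr _
  have step3 : r ^ (h - m) = r ^ h * (1/r) ^ m := by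
    rw [pow_sub₀ _ hr0.ne' hmh, div_pow, one_pow]
    field_simp
  have hrh : r ^ h ≤ ((1:ℝ)/4) ^ t := by
    calc r ^ h ≤ (((1:ℝ)/4) ^ Nb) ^ h := pow_le_pow_left₀ hr0.le hrN _
      _ = ((1:ℝ)/4) ^ (Nb * h) := by rw [← pow_mul]
      _ ≤ ((1:ℝ)/4) ^ t := pow_le_pow_of_le_one (by norm_num) (by norm_num) htNh
  calc colProb p D ≤ 2 ^ t * p ^ h := step1
    _ ≤ 2 ^ t * (p ^ m * (r ^ h * (1/r) ^ m)) := by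
        rw [← step3]
        apply mul_le_mul_of_nonneg_left step2 (by positivity)
    _ ≤ 2 ^ t * (p ^ m * (((1:ℝ)/4) ^ t * (1/r) ^ m)) := by
        apply mul_le_mul_of_nonneg_left _ (by positivity)
        apply mul_le_mul_of_nonneg_left _ (pow_nonneg h0 _)
        apply mul_le_mul_of_nonneg_right hrh (by positivity)
    _ = p ^ m * (1/r) ^ m * (2 ^ t * ((1:ℝ)/4) ^ t) := by ring
    _ = p ^ m * (1/r) ^ m * ((1:ℝ)/2) ^ t := by
        have h24 : (2:ℝ) ^ t * ((1:ℝ)/4) ^ t = ((1:ℝ)/2) ^ t := by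
          rw [← mul_pow]; norm_num
        rw [h24]
    _ ≤ p ^ m * (1/r) ^ m * (t:ℝ)⁻¹ := by
        apply mul_le_mul_of_nonneg_left (half_pow_le_inv ht) (by positivity)

lemma small_tail_tail {t m Nb : ℕ} {p r β : ℝ} (h0 : 0 ≤ p) (hp1 : p ≤ 1) (hpr : 1 - p ≤ r)
    (hr0 : 0 < r) (hr1 : r ≤ 1) (hrN : r ≤ (1/4) ^ Nb) (hβ : 0 < β) (hNb : 1/β ≤ Nb)
    (hmt : (m:ℝ) ≤ β * t) (ht : 1 ≤ t)
    {D : Set (Fin t → Bool)} (hD : ∀ c ∈ D, β * t ≤ ((t - cnt c : ℕ) : ℝ)) :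
    colProb p D ≤ (1 - p) ^ m * (1/r) ^ m * (t:ℝ)⁻¹ := by
  set h : ℕ := ⌈β * t⌉₊ with hh
  have hmh : m ≤ h := by
    have : (m:ℝ) ≤ ⌈β * t⌉₊ := le_trans hmt (Nat.le_ceil _)
    exact_mod_cast this
  have htNh : t ≤ Nb * h := by
    have h1 : (t:ℝ) ≤ (Nb:ℝ) * h := by
      have h2 : β * t ≤ (h:ℝ) := Nat.le_ceil _
      have h3 : 1 ≤ β * Nb := by
        have := mul_le_mul_of_nonneg_left hNb hβ.le
        rwa [mul_one_div, div_self hβ.ne'] at this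
      calc (t:ℝ) = 1 * t := (one_mul _).symm
        _ ≤ (β * Nb) * t := by
            apply mul_le_mul_of_nonneg_right h3 (by positivity)
        _ = (Nb:ℝ) * (β * t) := by ring
        _ ≤ (Nb:ℝ) * h := by
            apply mul_le_mul_of_nonneg_left h2 (by positivity)
    exact_mod_cast h1
  have h1p0 : 0 ≤ 1 - p := by linarith
  have step1 : colProb p D ≤ 2 ^ t * (1 - p) ^ h := by
    apply colProb_tail_tail h0 hp1 h
    intro c hc
    have := hD c hc
    rw [hh, Nat.ceil_le]
    exact_mod_cast this
  have step2 : (1 - p) ^ h ≤ (1 - p) ^ m * r ^ (h - m) := by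
    have heq : (1 - p) ^ h = (1 - p) ^ m * (1 - p) ^ (h - m) := by
      rw [← pow_add]; congr 1; omega
    rw [heq]
    apply mul_le_mul_of_nonneg_left _ (pow_nonneg h1p0 _)
    exact pow_le_pow_left₀ h1p0 hpr _
  have step3 : r ^ (h - m) = r ^ h * (1/r) ^ m := by
    rw [pow_sub₀ _ hr0.ne' hmh, div_pow, one_pow]
    field_simp
  have hrh : r ^ h ≤ ((1:ℝ)/4) ^ t := by
    calc r ^ h ≤ (((1:ℝ)/4) ^ Nb) ^ h := pow_le_pow_left₀ hr0.le hrN _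
      _ = ((1:ℝ)/4) ^ (Nb * h) := by rw [← pow_mul]
      _ ≤ ((1:ℝ)/4) ^ t := pow_le_pow_of_le_one (by norm_num) (by norm_num) htNh
  calc colProb p D ≤ 2 ^ t * (1 - p) ^ h := step1
    _ ≤ 2 ^ t * ((1 - p) ^ m * (r ^ h * (1/r) ^ m)) := by
        rw [← step3]
        apply mul_le_mul_of_nonneg_left step2 (by positivity)
    _ ≤ 2 ^ t * ((1 - p) ^ m * (((1:ℝ)/4) ^ t * (1/r) ^ m)) := by
        apply mul_le_mul_of_nonneg_left _ (by positivity)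
        apply mul_le_mul_of_nonneg_left _ (pow_nonneg h1p0 _)
        apply mul_le_mul_of_nonneg_right hrh (by positivity)
    _ = (1 - p) ^ m * (1/r) ^ m * (2 ^ t * ((1:ℝ)/4) ^ t) := by ring
    _ = (1 - p) ^ m * (1/r) ^ m * ((1:ℝ)/2) ^ t := by
        have h24 : (2:ℝ) ^ t * ((1:ℝ)/4) ^ t = ((1:ℝ)/2) ^ t := by
          rw [← mul_pow]; norm_num
        rw [h24]
    _ ≤ (1 - p) ^ m * (1/r) ^ m * (t:ℝ)⁻¹ := by
        apply mul_le_mul_of_nonneg_left (half_pow_le_inv ht) (by positivity)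

set_option maxHeartbeats 2000000 in
theorem stmt2 {n : ℕ} (f : (Fin n → ℝ) → ℝ)
    (hrange : ∀ p ∈ cube n, f p ∈ Set.Icc (0 : ℝ) 1)
    (hcont : ContinuousOn f (cube n))
    (hpb : PolyBounded f)
    (L : Set (Fin n → ℝ)) (hL : L = {p ∈ cube n | f p ≤ 3 / 8}) :
    ∀ q ∈ L, ∃ r : ℝ, 0 < r ∧ ∃ tq : ℕ, ∀ p ∈ L, ‖p - q‖ < r →
      ∀ t : ℕ, tq ≤ t →
        (1 / 8) * f p ≤
          f p - (1 / 4) * coinProb t p {x | 1 / 2 ≤ f (empAvg t x)} := by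
  classical
  obtain ⟨m, c, hc, hpoly⟩ := hpb
  intro q hq
  rw [hL, Set.mem_setOf_eq] at hq
  obtain ⟨hqcube, hq38⟩ := hq
  set K : Set (Fin n → ℝ) := {y | y ∈ cube n ∧ 1/2 ≤ f y} with hKdef
  have hKcpt : IsCompact K := K_compact f hcont
  have hqK : q ∉ K := by
    intro h
    have := h.2
    linarith
  -- the separation radius δ
  obtain ⟨δ, hδpos, hδ18, hδK⟩ : ∃ δ : ℝ, 0 < δ ∧ δ ≤ 1/8 ∧ ∀ y ∈ K, 3*δ ≤ dist y q := by
    by_cases hne : K.Nonempty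
    · obtain ⟨y₀, hy₀K, hy₀min⟩ := hKcpt.exists_isMinOn hne
        ((continuous_id.dist continuous_const).continuousOn)
      have hy₀q : 0 < dist y₀ q := by
        rw [dist_pos]
        intro h
        rw [h] at hy₀K
        exact hqK hy₀K
      refine ⟨min (dist y₀ q / 3) (1/8), by positivity, min_le_right _ _, ?_⟩
      intro y hy
      have h1 : dist y₀ q ≤ dist y q := hy₀min hy
      have h2 : min (dist y₀ q / 3) (1/8) ≤ dist y₀ q / 3 := min_le_left _ _
      linarith
    · exact ⟨1/8, by norm_num, le_refl _, fun y hy => absurd ⟨y, hy⟩ hne⟩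
  -- the interior margin a
  obtain ⟨a, hapos, ha12, haS⟩ : ∃ a : ℝ, 0 < a ∧ a ≤ 1/2 ∧
      ∀ i, q i ≠ 0 → q i ≠ 1 → a ≤ q i ∧ q i ≤ 1 - a := by
    set T : Finset ℝ := insert (1/2)
      ((Finset.univ.filter (fun i => q i ≠ 0 ∧ q i ≠ 1)).image
        (fun i => min (q i) (1 - q i))) with hT
    have hTne : T.Nonempty := ⟨1/2, Finset.mem_insert_self _ _⟩
    refine ⟨T.min' hTne, ?_, ?_, ?_⟩
    · rw [Finset.lt_min'_iff]
      intro y hy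
      rw [hT, Finset.mem_insert] at hy
      rcases hy with h | h
      · rw [h]; norm_num
      · rw [Finset.mem_image] at h
        obtain ⟨i, hi, hiy⟩ := h
        rw [Finset.mem_filter] at hi
        obtain ⟨hi0, hi1⟩ := hi.2
        have h0 := (hqcube i).1
        have h1 := (hqcube i).2
        rw [← hiy, lt_min_iff]
        constructor
        · cases' lt_or_eq_of_le h0 with h h
          · exact h
          · exact absurd h.symm hi0
        · cases' lt_or_eq_of_le h1 with h h
          · linarith
          · exact absurd h hi1
    · exact Finset.min'_le _ _ (Finset.mem_insert_self _ _)
    · intro i hi0 hi1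
      have hmem : min (q i) (1 - q i) ∈ T := by
        rw [hT, Finset.mem_insert]
        right
        rw [Finset.mem_image]
        exact ⟨i, Finset.mem_filter.mpr ⟨Finset.mem_univ i, hi0, hi1⟩, rfl⟩
      have := Finset.min'_le _ _ hmem
      constructor
      · exact le_trans this (min_le_left _ _)
      · have h2 := le_trans this (min_le_right _ _)
        linarith
  -- the pattern threshold β
  obtain ⟨β, hβpos, hβδ, hβa, hβbad⟩ : ∃ β : ℝ, 0 < β ∧ β ≤ δ ∧ β ≤ a/4 ∧
      ∀ A B : Finset (Fin n), Disjoint A B → (∀ z ∈ face A B, f z = 0) →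
        ∀ y ∈ K, ¬((∀ i ∈ A, y i ≤ β) ∧ (∀ i ∈ B, 1 - β ≤ y i)) := by
    have hper : ∀ AB : Finset (Fin n) × Finset (Fin n), ∃ β : ℝ, 0 < β ∧
        (Disjoint AB.1 AB.2 → (∀ z ∈ face AB.1 AB.2, f z = 0) →
          ∀ y ∈ K, ¬((∀ i ∈ AB.1, y i ≤ β) ∧ (∀ i ∈ AB.2, 1 - β ≤ y i))) := by
      rintro ⟨A, B⟩
      by_cases hcase : Disjoint A B ∧ (∀ z ∈ face A B, f z = 0)
      · obtain ⟨hd, hz⟩ := hcase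
        by_cases hne : K.Nonempty
        · set g : (Fin n → ℝ) → ℝ := fun y => (∑ i ∈ A, y i) + ∑ i ∈ B, (1 - y i) with hg
          have hgc : Continuous g := by
            apply Continuous.add
            · exact continuous_finset_sum _ (fun i _ => continuous_apply i)
            · exact continuous_finset_sum _ (fun i _ => continuous_const.sub (continuous_apply i))
          obtain ⟨y₁, hy₁K, hy₁min⟩ := hKcpt.exists_isMinOn hne hgc.continuousOn
          have hgpos : 0 < g y₁ := by
            rcases lt_or_ge 0 (g y₁) with h | h
            · exact h
            · exfalso
              have hterms0 : (∀ i ∈ A, y₁ i = 0) ∧ (∀ i ∈ B, y₁ i = 1) := by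
                have hA0 : ∀ i ∈ A, 0 ≤ y₁ i := fun i _ => (hy₁K.1 i).1
                have hB0 : ∀ i ∈ B, 0 ≤ 1 - y₁ i := fun i _ => by
                  have := (hy₁K.1 i).2; linarith
                have hsA : 0 ≤ ∑ i ∈ A, y₁ i := Finset.sum_nonneg hA0
                have hsB : 0 ≤ ∑ i ∈ B, (1 - y₁ i) := Finset.sum_nonneg hB0
                have hgle : (∑ i ∈ A, y₁ i) + ∑ i ∈ B, (1 - y₁ i) ≤ 0 := h
                have hsA0 : ∑ i ∈ A, y₁ i = 0 := by linarith
                have hsB0 : ∑ i ∈ B, (1 - y₁ i) = 0 := by linarith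
                constructor
                · intro i hi
                  have := (Finset.sum_eq_zero_iff_of_nonneg hA0).mp hsA0 i hi
                  exact this
                · intro i hi
                  have := (Finset.sum_eq_zero_iff_of_nonneg hB0).mp hsB0 i hi
                  linarith
              have hf0 : f y₁ = 0 :=
                face_zero_closure f hcont A B hd hz hy₁K.1 hterms0.1 hterms0.2
              have := hy₁K.2
              rw [hf0] at this
              linarith
          refine ⟨g y₁ / (n + 1), by positivity, fun _ _ y hy hbox => ?_⟩
          have hgy : g y ≤ n * (g y₁ / (n+1)) := by
            rw [hg]
            have hA : ∑ i ∈ A, y i ≤ A.card * (g y₁ / (n+1)) := by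
              calc ∑ i ∈ A, y i ≤ ∑ _i ∈ A, (g y₁ / (n+1)) :=
                    Finset.sum_le_sum (fun i hi => hbox.1 i hi)
                _ = A.card * (g y₁ / (n+1)) := by rw [Finset.sum_const, nsmul_eq_mul]
            have hB : ∑ i ∈ B, (1 - y i) ≤ B.card * (g y₁ / (n+1)) := by
              calc ∑ i ∈ B, (1 - y i) ≤ ∑ _i ∈ B, (g y₁ / (n+1)) :=
                    Finset.sum_le_sum (fun i hi => by have := hbox.2 i hi; linarith)
                _ = B.card * (g y₁ / (n+1)) := by rw [Finset.sum_const, nsmul_eq_mul]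
            have hcard : (A.card : ℝ) + B.card ≤ n := by
              have h1 : A.card + B.card = (A ∪ B).card := (Finset.card_union_of_disjoint hd).symm
              have h2 : (A ∪ B).card ≤ n := by
                have := Finset.card_le_univ (A ∪ B)
                simpa using this
              exact_mod_cast h1 ▸ h2
            have hpos : 0 ≤ g y₁ / (n+1) := by positivity
            calc (∑ i ∈ A, y i) + ∑ i ∈ B, (1 - y i)
                ≤ A.card * (g y₁ / (n+1)) + B.card * (g y₁ / (n+1)) := add_le_add hA hB
              _ = ((A.card : ℝ) + B.card) * (g y₁ / (n+1)) := by ring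
              _ ≤ n * (g y₁ / (n+1)) := mul_le_mul_of_nonneg_right hcard hpos
          have hmin : g y₁ ≤ g y := hy₁min hy
          have hn1 : (0:ℝ) < (n:ℝ) + 1 := by positivity
          have hlt : (n:ℝ) * (g y₁ / ((n:ℝ)+1)) < g y₁ := by
            rw [mul_div_assoc', div_lt_iff₀ hn1]
            linarith only [hgpos]
          exact absurd (le_trans hmin hgy) (not_le.mpr hlt)
        · exact ⟨1, one_pos, fun _ _ y hy => absurd ⟨y, hy⟩ hne⟩
      · refine ⟨1, one_pos, fun hd hz => ?_⟩
        exact absurd ⟨hd, hz⟩ hcase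
    set F : Finset (Fin n) × Finset (Fin n) → ℝ := fun AB => (hper AB).choose with hF
    have hFpos : ∀ AB, 0 < F AB := fun AB => (hper AB).choose_spec.1
    have hFspec := fun AB => (hper AB).choose_spec.2
    set β₀ : ℝ := Finset.univ.inf' ⟨(∅, ∅), Finset.mem_univ _⟩ F with hβ₀
    have hβ₀pos : 0 < β₀ := by
      rw [hβ₀]
      exact (Finset.lt_inf'_iff _).2 fun AB _ => hFpos AB
    refine ⟨min (min β₀ δ) (a/4), by positivity, ?_, min_le_right _ _, ?_⟩
    · exact le_trans (min_le_left _ _) (min_le_right _ _)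
    · intro A B hd hz y hy hbox
      have hβle : min (min β₀ δ) (a/4) ≤ F (A, B) := by
        calc min (min β₀ δ) (a/4) ≤ β₀ := le_trans (min_le_left _ _) (min_le_left _ _)
          _ ≤ F (A, B) := Finset.inf'_le _ (Finset.mem_univ _)
      refine hFspec (A, B) hd hz y hy ⟨?_, ?_⟩
      · intro i hi
        exact le_trans (hbox.1 i hi) hβle
      · intro i hi
        refine le_trans ?_ (hbox.2 i hi)
        linarith
  -- radius and time threshold
  set Nb : ℕ := ⌈1/β⌉₊ with hNbdef
  have hNb : 1/β ≤ (Nb:ℝ) := Nat.le_ceil _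
  set r : ℝ := min (min δ (a/2)) ((1/4) ^ Nb) with hrdef
  have hrpos : 0 < r := by
    rw [hrdef]
    apply lt_min (lt_min hδpos (by positivity))
    positivity
  have hrδ : r ≤ δ := le_trans (min_le_left _ _) (min_le_left _ _)
  have hra : r ≤ a/2 := le_trans (min_le_left _ _) (min_le_right _ _)
  have hrN : r ≤ (1/4) ^ Nb := min_le_right _ _
  have hr12 : r ≤ 1/2 := by linarith
  have hr1 : r ≤ 1 := by linarith
  set M : ℝ := (4/(a^2*r))^m * (4/a^2) with hMdef
  have hMpos : 0 < M := by rw [hMdef]; positivity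
  have haa : a^2 ≤ 1/4 := by
    nlinarith only [hapos, ha12]
  have hbase : (2:ℝ) ≤ 4/(a^2*r) := by
    rw [le_div_iff₀ (by positivity)]
    linarith only [mul_le_mul haa hr12 hrpos.le (by norm_num : (0:ℝ) ≤ 1/4)]
  have hb4a : 4/a^2 ≤ 4/(a^2*r) := by
    apply div_le_div_of_nonneg_left (by norm_num) (by positivity)
    calc a^2 * r ≤ a^2 * 1 := by
          apply mul_le_mul_of_nonneg_left hr1 (sq_nonneg a)
      _ = a^2 := mul_one _
  have h4a1 : (1:ℝ) ≤ 4/a^2 := by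
    rw [le_div_iff₀ (by positivity)]
    linarith only [haa]
  have hM1 : (2:ℝ)^m ≤ M := by
    rw [hMdef]
    calc (2:ℝ)^m ≤ (4/(a^2*r))^m := pow_le_pow_left₀ (by norm_num) hbase m
      _ = (4/(a^2*r))^m * 1 := (mul_one _).symm
      _ ≤ (4/(a^2*r))^m * (4/a^2) := by
          apply mul_le_mul_of_nonneg_left h4a1 (by positivity)
  have hM3 : (2/r)^m ≤ M := by
    rw [hMdef]
    have h1 : 2/r ≤ 4/(a^2*r) := by
      rw [div_le_div_iff₀ (by positivity) (by positivity)]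
      linarith only [mul_le_mul_of_nonneg_right haa hrpos.le, hrpos]
    calc (2/r)^m ≤ (4/(a^2*r))^m := pow_le_pow_left₀ (by positivity) h1 m
      _ = (4/(a^2*r))^m * 1 := (mul_one _).symm
      _ ≤ (4/(a^2*r))^m * (4/a^2) := by
          apply mul_le_mul_of_nonneg_left h4a1 (by positivity)
  have hM2 : (1/r)^m ≤ M := by
    refine le_trans (pow_le_pow_left₀ (by positivity) ?_ m) hM3
    gcongr
    norm_num
  have hM4 : (2/a)^m * (4/a^2) ≤ M := by
    rw [hMdef]
    apply mul_le_mul_of_nonneg_right _ (by positivity)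
    apply pow_le_pow_left₀ (by positivity)
    rw [div_le_div_iff₀ (by positivity) (by positivity)]
    have har : a * r ≤ (1/2) * (1/2) :=
      mul_le_mul ha12 hr12 hrpos.le (by norm_num)
    have h2 : a * (a * r) ≤ a * ((1/2) * (1/2)) :=
      mul_le_mul_of_nonneg_left har hapos.le
    linarith only [h2, hapos]
  have hM5 : (4/a^2)^m ≤ M := by
    rw [hMdef]
    calc (4/a^2)^m ≤ (4/(a^2*r))^m := pow_le_pow_left₀ (by positivity) hb4a m
      _ = (4/(a^2*r))^m * 1 := (mul_one _).symm
      _ ≤ (4/(a^2*r))^m * (4/a^2) := by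
          apply mul_le_mul_of_nonneg_left h4a1 (by positivity)
  set A₀ : Finset (Fin n) := Finset.univ.filter (fun i => q i = 0) with hA₀def
  set B₀ : Finset (Fin n) := Finset.univ.filter (fun i => q i = 1) with hB₀def
  set κ : ℝ := (a^2/4)^(n*m) with hκdef
  have hκpos : 0 < κ := by rw [hκdef]; positivity
  set CST : ℝ := M^n/c + (n:ℝ)/(16*δ^2) / (c*κ) with hCSTdef
  have hCST0 : 0 ≤ CST := by
    rw [hCSTdef]
    positivity
  set κ₂ : ℝ := (Fintype.card (Finset (Fin n) × Finset (Fin n)) : ℝ) with hκ₂def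
  have hκ₂0 : (0:ℝ) ≤ κ₂ := by rw [hκ₂def]; positivity
  refine ⟨r, hrpos, max 2 (max (⌈(m:ℝ)/β⌉₊+1) (⌈κ₂*CST⌉₊+1)), ?_⟩
  intro p hp hpq t htq
  rw [hL, Set.mem_setOf_eq] at hp
  obtain ⟨hpcube, hp38⟩ := hp
  have hfp0 : 0 ≤ f p := (hrange p hpcube).1
  have ht2 : 2 ≤ t := le_trans (le_max_left _ _) htq
  have ht1 : 1 ≤ t := by omega
  have htpos : (0:ℝ) < t := by exact_mod_cast ht1
  have htmβ : (m:ℝ) ≤ β * t := by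
    have h1 : (⌈(m:ℝ)/β⌉₊ + 1 : ℕ) ≤ t :=
      le_trans (le_trans (le_max_left _ _) (le_max_right _ _)) htq
    have h2 : (m:ℝ)/β ≤ ⌈(m:ℝ)/β⌉₊ := Nat.le_ceil _
    have h3 : ((⌈(m:ℝ)/β⌉₊ : ℝ) + 1) ≤ (t:ℝ) := by exact_mod_cast h1
    have h4 : (m:ℝ)/β ≤ (t:ℝ) := by linarith
    rw [div_le_iff₀ hβpos] at h4
    linarith [h4]
  have htCST : κ₂ * CST ≤ (t:ℝ) := by
    have h1 : (⌈κ₂*CST⌉₊ + 1 : ℕ) ≤ t :=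
      le_trans (le_trans (le_max_right _ _) (le_max_right _ _)) htq
    have h3 : ((⌈κ₂*CST⌉₊ : ℝ) + 1) ≤ (t:ℝ) := by exact_mod_cast h1
    linarith [Nat.le_ceil (κ₂*CST)]
  have hpi : ∀ i, |p i - q i| < r := by
    intro i
    have h1 : ‖(p - q) i‖ ≤ ‖p - q‖ := norm_le_pi_norm (p - q) i
    have h2 : (p - q) i = p i - q i := rfl
    rw [h2, Real.norm_eq_abs] at h1
    linarith
  have hp01 : ∀ i, 0 ≤ p i ∧ p i ≤ 1 := hpcube
  set K' : Set (Fin t → Fin n → Bool) := {x | 1/2 ≤ f (empAvg t x)} with hK'def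
  set pt : (Fin t → Fin n → Bool) → Finset (Fin n) × Finset (Fin n) :=
    fun x => (Finset.univ.filter (fun i => empAvg t x i ≤ β),
              Finset.univ.filter (fun i => 1 - β ≤ empAvg t x i)) with hptdef
  set DA : Set (Fin t → Bool) := {c | (cnt c : ℝ) ≤ β * t} with hDAdef
  set DB : Set (Fin t → Bool) := {c | (1-β) * t ≤ (cnt c : ℝ)} with hDBdef
  set DS : Set (Fin t → Bool) := {c | β * t < (cnt c : ℝ) ∧ (cnt c : ℝ) < (1-β)*t} with hDSdef
  have hpat : ∀ AB : Finset (Fin n) × Finset (Fin n),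
      coinProb t p (K' ∩ {x | pt x = AB}) ≤ CST * (t:ℝ)⁻¹ * f p := by
    rintro ⟨A, B⟩
    have hfibpat : ∀ x, pt x = (A, B) →
        ∀ i, (i ∈ A ↔ empAvg t x i ≤ β) ∧ (i ∈ B ↔ 1 - β ≤ empAvg t x i) := by
      intro x hx i
      rw [hptdef] at hx
      simp only [Prod.mk.injEq] at hx
      constructor
      · rw [← hx.1, Finset.mem_filter]
        simp
      · rw [← hx.2, Finset.mem_filter]
        simp
    have hCSTgoal0 : (0:ℝ) ≤ CST * (t:ℝ)⁻¹ * f p := by positivity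
    by_cases hdis : Disjoint A B
    · by_cases hallz : ∀ z ∈ face A B, f z = 0
      · -- dead pattern: the fiber misses K'
        have hempty : K' ∩ {x | pt x = (A, B)} = ∅ := by
          rw [Set.eq_empty_iff_forall_notMem]
          rintro x ⟨hxK, hxpt⟩
          have hy : empAvg t x ∈ K := ⟨empAvg_cube ht1 x, hxK⟩
          refine hβbad A B hdis hallz (empAvg t x) hy ⟨?_, ?_⟩
          · intro i hi
            exact ((hfibpat x hxpt i).1).mp hi
          · intro i hi
            exact ((hfibpat x hxpt i).2).mp hi
        rw [hempty, coinProb_empty]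
        exact hCSTgoal0
      · have hflow : ∀ p' ∈ cube n, c * facePoly A B p' ^ m ≤ f p' :=
          hpoly A B hdis hallz
        set Φ : Fin n → ℝ := fun i =>
          if i ∈ A then 1 - p i else if i ∈ B then p i else p i * (1 - p i) with hΦdef
        have hΦ0 : ∀ i, 0 ≤ Φ i := by
          intro i
          simp only [hΦdef]
          have h0 := (hp01 i).1
          have h1 := (hp01 i).2
          split
          · linarith
          · split
            · linarith
            · nlinarith
        have hface : facePoly A B p = ∏ i, Φ i := facePoly_eq A B hdis p
        by_cases hAB0 : (A, B) = (A₀, B₀)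
        · -- the central pattern: Chebyshev bound
          have hAeq : A = A₀ := congrArg Prod.fst hAB0
          have hBeq : B = B₀ := congrArg Prod.snd hAB0
          have hr18 : r ≤ 1/8 := le_trans hrδ hδ18
          have hΦκ : ∀ i, a^2/4 ≤ Φ i := by
            intro i
            have hp0i := (hp01 i).1
            have hp1i := (hp01 i).2
            have hpqi := hpi i
            simp only [hΦdef]
            by_cases hiA : i ∈ A
            · rw [if_pos hiA]
              have hq0 : q i = 0 := by
                rw [hAeq, hA₀def] at hiA
                exact (Finset.mem_filter.mp hiA).2
              have hpir : p i < r := by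
                rw [hq0, sub_zero, abs_lt] at hpqi
                exact hpqi.2
              linarith only [haa, hpir, hr18]
            · rw [if_neg hiA]
              by_cases hiB : i ∈ B
              · rw [if_pos hiB]
                have hq1 : q i = 1 := by
                  rw [hBeq, hB₀def] at hiB
                  exact (Finset.mem_filter.mp hiB).2
                have hpir : 1 - p i < r := by
                  rw [hq1, abs_lt] at hpqi
                  linarith only [hpqi]
                linarith only [haa, hpir, hr18]
              · rw [if_neg hiB]
                have hq0 : q i ≠ 0 := by
                  intro h
                  apply hiA
                  rw [hAeq, hA₀def]
                  exact Finset.mem_filter.mpr ⟨Finset.mem_univ i, h⟩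
                have hq1 : q i ≠ 1 := by
                  intro h
                  apply hiB
                  rw [hBeq, hB₀def]
                  exact Finset.mem_filter.mpr ⟨Finset.mem_univ i, h⟩
                obtain ⟨haq, haq1⟩ := haS i hq0 hq1
                have hpa : a/2 ≤ p i := by
                  rw [abs_lt] at hpqi
                  linarith only [hpqi, haq, hra]
                have hpa1 : p i ≤ 1 - a/2 := by
                  rw [abs_lt] at hpqi
                  linarith only [hpqi, haq1, hra]
                have h2 : (a/2)*(a/2) ≤ p i * (1 - p i) :=
                  mul_le_mul hpa (by linarith only [hpa1]) (by linarith only [hapos]) hp0i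
                linarith only [h2]
          have hcκ : (0:ℝ) < c * κ := mul_pos hc hκpos
          have hκf : c * κ ≤ f p := by
            have h1 : (a^2/4)^n ≤ ∏ i, Φ i := by
              calc (a^2/4)^n = ∏ _i : Fin n, (a^2/4) := by
                    rw [Finset.prod_const]
                    simp [Finset.card_univ]
                _ ≤ ∏ i, Φ i :=
                    Finset.prod_le_prod (fun i _ => by positivity) (fun i _ => hΦκ i)
            have h2 : κ ≤ facePoly A B p ^ m := by
              rw [hface, hκdef]
              calc (a^2/4)^(n*m) = ((a^2/4)^n)^m := by rw [pow_mul]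
                _ ≤ (∏ i, Φ i)^m := pow_le_pow_left₀ (by positivity) h1 m
            calc c * κ ≤ c * facePoly A B p ^ m := mul_le_mul_of_nonneg_left h2 hc.le
              _ ≤ f p := hflow p hpcube
          set Dch : Fin n → Set (Fin t → Bool) :=
            fun i => {cc | (t:ℝ) * (2*δ) ≤ |(cnt cc : ℝ) - t * p i|} with hDchdef
          have hcov : ∀ x ∈ K' ∩ {x | pt x = (A, B)}, ∃ i, x ∈ {x | col i x ∈ Dch i} := by
            rintro x ⟨hxK, hxpt⟩
            have hycube : empAvg t x ∈ cube n := empAvg_cube ht1 x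
            have hyK : empAvg t x ∈ K := ⟨hycube, hxK⟩
            have hdisty := hδK (empAvg t x) hyK
            obtain ⟨i, hidev⟩ : ∃ i, 3*δ ≤ |empAvg t x i - q i| := by
              by_contra hall
              push_neg at hall
              have hlt : dist (empAvg t x) q < 3*δ := by
                rw [dist_pi_lt_iff (by positivity)]
                intro i
                rw [Real.dist_eq]
                exact hall i
              linarith only [hlt, hdisty]
            have hiff := hfibpat x hxpt i
            have hiA : i ∉ A := by
              intro hiA
              have hq0 : q i = 0 := by
                rw [hAeq, hA₀def] at hiA
                exact (Finset.mem_filter.mp hiA).2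
              have h1 : empAvg t x i ≤ β := hiff.1.mp hiA
              have h2 : 0 ≤ empAvg t x i := (hycube i).1
              rw [hq0, sub_zero] at hidev
              have h3 : |empAvg t x i| ≤ δ := abs_le.mpr ⟨by linarith only [h2, hδpos],
                by linarith only [h1, hβδ]⟩
              linarith only [hidev, h3, hδpos]
            have hiB : i ∉ B := by
              intro hiB
              have hq1 : q i = 1 := by
                rw [hBeq, hB₀def] at hiB
                exact (Finset.mem_filter.mp hiB).2
              have h1 : 1 - β ≤ empAvg t x i := hiff.2.mp hiB
              have h2 : empAvg t x i ≤ 1 := (hycube i).2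
              rw [hq1] at hidev
              have h3 : |empAvg t x i - 1| ≤ δ := abs_le.mpr
                ⟨by linarith only [h1, hβδ], by linarith only [h2, hδpos]⟩
              linarith only [hidev, h3, hδpos]
            have hpq := hpi i
            have hyp : 2*δ ≤ |empAvg t x i - p i| := by
              have h3 : |empAvg t x i - q i| ≤ |empAvg t x i - p i| + |p i - q i| :=
                abs_sub_le _ _ _
              have h4 : |p i - q i| < δ := lt_of_lt_of_le hpq hrδ
              linarith only [hidev, h3, h4]
            refine ⟨i, ?_⟩
            simp only [Set.mem_setOf_eq, hDchdef]
            have hcnt : empAvg t x i = (cnt (col i x) : ℝ)/t := empAvg_cnt x i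
            have heqt : (cnt (col i x):ℝ) - t * p i = t * (empAvg t x i - p i) := by
              rw [hcnt]
              field_simp
            rw [heqt, abs_mul, abs_of_pos htpos]
            exact mul_le_mul_of_nonneg_left hyp htpos.le
          calc coinProb t p (K' ∩ {x | pt x = (A, B)})
              ≤ ∑ i, coinProb t p {x | col i x ∈ Dch i} := coinProb_union_le hp01 hcov
            _ ≤ ∑ _i : Fin n, 1/(4*(t:ℝ)*(2*δ)^2) := by
                apply Finset.sum_le_sum
                intro i _
                rw [coinProb_col]
                apply colProb_cheb (hp01 i).1 (hp01 i).2 (by positivity) ht1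
                intro cc hcc
                simp only [hDchdef, Set.mem_setOf_eq] at hcc
                exact hcc
            _ = (n:ℝ) * (1/(4*(t:ℝ)*(2*δ)^2)) := by
                rw [Finset.sum_const]
                simp [Finset.card_univ, nsmul_eq_mul]
            _ = ((n:ℝ)/(16*δ^2) / (c*κ)) * (t:ℝ)⁻¹ * (c*κ) := by
                field_simp
                ring
            _ ≤ ((n:ℝ)/(16*δ^2) / (c*κ)) * (t:ℝ)⁻¹ * f p := by
                apply mul_le_mul_of_nonneg_left hκf
                positivity
            _ ≤ CST * (t:ℝ)⁻¹ * f p := by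
                apply mul_le_mul_of_nonneg_right _ hfp0
                apply mul_le_mul_of_nonneg_right _ (by positivity)
                rw [hCSTdef]
                have hMn : 0 ≤ M^n/c := by positivity
                linarith only [hMn]
        · -- main case: some mismatching coordinate gives decay
          have hsub : K' ∩ {x | pt x = (A, B)} ⊆
              {x | ∀ i, col i x ∈ (if i ∈ A then DA else if i ∈ B then DB else DS)} := by
            rintro x ⟨hxK, hxpt⟩ i
            have hiff := hfibpat x hxpt i
            have hcnt : empAvg t x i = (cnt (col i x) : ℝ)/t := empAvg_cnt x i
            by_cases hiA : i ∈ A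
            · rw [if_pos hiA]
              rw [hDAdef]
              have := hiff.1.mp hiA
              rw [hcnt, div_le_iff₀ htpos] at this
              simpa using this
            · rw [if_neg hiA]
              by_cases hiB : i ∈ B
              · rw [if_pos hiB]
                rw [hDBdef]
                have := hiff.2.mp hiB
                rw [hcnt, le_div_iff₀ htpos] at this
                simp only [Set.mem_setOf_eq]
                linarith
              · rw [if_neg hiB]
                rw [hDSdef]
                have h1 : ¬ empAvg t x i ≤ β := fun h => hiA (hiff.1.mpr h)
                have h2 : ¬ 1 - β ≤ empAvg t x i := fun h => hiB (hiff.2.mpr h)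
                push_neg at h1 h2
                rw [hcnt, lt_div_iff₀ htpos] at h1
                rw [hcnt, div_lt_iff₀ htpos] at h2
                simp only [Set.mem_setOf_eq]
                constructor
                · linarith
                · linarith
          have hcoord : ∀ i, colProb (p i) (if i ∈ A then DA else if i ∈ B then DB else DS)
              ≤ M * Φ i ^ m ∧
              (¬((i ∈ A ↔ q i = 0) ∧ (i ∈ B ↔ q i = 1)) →
                colProb (p i) (if i ∈ A then DA else if i ∈ B then DB else DS)
                  ≤ M * Φ i ^ m * (t:ℝ)⁻¹) := by
            intro i
            have hp0i := (hp01 i).1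
            have hp1i := (hp01 i).2
            have hpqi := hpi i
            have hq0i := (hqcube i).1
            have hq1i := (hqcube i).2
            have hβ18 : β ≤ 1/8 := le_trans hβδ hδ18
            have hr18 : r ≤ 1/8 := le_trans hrδ hδ18
            have hΦi0 : 0 ≤ Φ i := hΦ0 i
            have ht1R : (1:ℝ) ≤ t := by exact_mod_cast ht1
            have htinv1 : (t:ℝ)⁻¹ ≤ 1 := inv_le_one_of_one_le₀ ht1R
            have ha20 : (0:ℝ) ≤ a/2 := by linarith only [hapos]
            have h1p0 : (0:ℝ) ≤ 1 - p i := by linarith only [hp1i]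
            have hpp0 : (0:ℝ) ≤ p i * (1 - p i) := mul_nonneg hp0i h1p0
            have hweak_of : ∀ (D' : Set (Fin t → Bool)) (X : ℝ), 0 ≤ X →
                colProb (p i) D' ≤ M * X * (t:ℝ)⁻¹ → colProb (p i) D' ≤ M * X := by
              intro D' X hX hstrong
              refine le_trans hstrong ?_
              calc M * X * (t:ℝ)⁻¹ ≤ M * X * 1 :=
                    mul_le_mul_of_nonneg_left htinv1 (mul_nonneg hMpos.le hX)
                _ = M * X := mul_one _
            by_cases hiA : i ∈ A
            · have hΦiA : Φ i = 1 - p i := by simp only [hΦdef]; rw [if_pos hiA]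
              rw [if_pos hiA, hΦiA]
              have hiB : i ∉ B := Finset.disjoint_left.mp hdis hiA
              by_cases hq0 : q i = 0
              · -- matched case
                have hpr : p i < r := by
                  rw [hq0] at hpqi
                  rw [sub_zero, abs_lt] at hpqi
                  exact hpqi.2
                have h12 : (1:ℝ)/2 ≤ 1 - p i := by linarith
                constructor
                · calc colProb (p i) DA ≤ 1 := colProb_le_one hp0i hp1i DA
                    _ = 2^m * ((1:ℝ)/2)^m := by rw [← mul_pow]; norm_num
                    _ ≤ M * (1 - p i)^m :=
                        mul_le_mul hM1 (pow_le_pow_left₀ (by norm_num) h12 m)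
                          (by positivity) hMpos.le
                · intro hn
                  exfalso
                  exact hn ⟨iff_of_true hiA hq0,
                    iff_of_false hiB (by rw [hq0]; norm_num)⟩
              · by_cases hq1 : q i = 1
                · -- q = 1, i ∈ A : strong decay
                  have hpr : 1 - p i ≤ r := by
                    rw [hq1] at hpqi
                    rw [abs_lt] at hpqi
                    linarith [hpqi.1]
                  have hsubD : ∀ c ∈ DA, β * t ≤ ((t - cnt c : ℕ) : ℝ) := by
                    intro c hcmem
                    rw [hDAdef] at hcmem
                    simp only [Set.mem_setOf_eq] at hcmem
                    rw [Nat.cast_sub (cnt_le c)]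
                    have h2β : (0:ℝ) ≤ (1 - 2*β) * t :=
                      mul_nonneg (by linarith only [hβ18]) htpos.le
                    linarith only [h2β, hcmem]
                  have hstrong : colProb (p i) DA ≤ M * (1 - p i)^m * (t:ℝ)⁻¹ := by
                    refine le_trans (small_tail_tail hp0i hp1i hpr hrpos hr1 hrN hβpos hNb
                      htmβ ht1 hsubD) ?_
                    calc (1 - p i)^m * (1/r)^m * (t:ℝ)⁻¹
                        = (1/r)^m * (1 - p i)^m * (t:ℝ)⁻¹ := by ring
                      _ ≤ M * (1 - p i)^m * (t:ℝ)⁻¹ := by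
                          apply mul_le_mul_of_nonneg_right _ (by positivity)
                          apply mul_le_mul_of_nonneg_right hM2 (pow_nonneg h1p0 m)
                  exact ⟨hweak_of DA ((1 - p i)^m) (pow_nonneg h1p0 m) hstrong, fun _ => hstrong⟩
                · -- interior, i ∈ A : Chebyshev decay
                  obtain ⟨haq, haq1⟩ := haS i hq0 hq1
                  have hpa : a/2 ≤ p i := by
                    rw [abs_lt] at hpqi
                    linarith
                  have hpa1 : p i ≤ 1 - a/2 := by
                    rw [abs_lt] at hpqi
                    linarith
                  have hΦa : a/2 ≤ 1 - p i := by linarith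
                  have hsubD : ∀ c ∈ DA, (t:ℝ) * (a/4) ≤ |(cnt c : ℝ) - t * p i| := by
                    intro c hcmem
                    rw [hDAdef] at hcmem
                    simp only [Set.mem_setOf_eq] at hcmem
                    rw [le_abs]
                    right
                    have h2 : (t:ℝ)*(a/4) ≤ (t:ℝ)*(p i - β) :=
                      mul_le_mul_of_nonneg_left (by linarith only [hpa, hβa]) htpos.le
                    linarith only [h2, hcmem]
                  have hstrong : colProb (p i) DA ≤ M * (1 - p i)^m * (t:ℝ)⁻¹ := by
                    refine le_trans (colProb_cheb hp0i hp1i (by positivity) ht1 hsubD) ?_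
                    have heq : 1 / (4 * (t:ℝ) * (a/4)^2) = (4/a^2) * (t:ℝ)⁻¹ := by
                      field_simp
                    rw [heq]
                    have hone : ((2/a) * (a/2) : ℝ) = 1 := by field_simp
                    calc (4/a^2) * (t:ℝ)⁻¹ = ((2/a)^m * (a/2)^m) * (4/a^2) * (t:ℝ)⁻¹ := by
                          rw [← mul_pow, hone, one_pow, one_mul]
                      _ = ((2/a)^m * (4/a^2)) * (a/2)^m * (t:ℝ)⁻¹ := by ring
                      _ ≤ M * (1 - p i)^m * (t:ℝ)⁻¹ := by
                          apply mul_le_mul_of_nonneg_right _ (by positivity)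
                          exact mul_le_mul hM4 (pow_le_pow_left₀ ha20 hΦa m)
                            (pow_nonneg ha20 m) hMpos.le
                  exact ⟨hweak_of DA ((1 - p i)^m) (pow_nonneg h1p0 m) hstrong,
                    fun _ => hstrong⟩
            · rw [if_neg hiA]
              by_cases hiB : i ∈ B
              · have hΦiB : Φ i = p i := by
                  simp only [hΦdef]; rw [if_neg hiA, if_pos hiB]
                rw [if_pos hiB, hΦiB]
                by_cases hq1 : q i = 1
                · -- matched case
                  have hpr : 1 - p i < r := by
                    rw [hq1, abs_lt] at hpqi
                    linarith [hpqi.1]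
                  have h12 : (1:ℝ)/2 ≤ p i := by linarith
                  constructor
                  · calc colProb (p i) DB ≤ 1 := colProb_le_one hp0i hp1i DB
                      _ = 2^m * ((1:ℝ)/2)^m := by rw [← mul_pow]; norm_num
                      _ ≤ M * (p i)^m :=
                          mul_le_mul hM1 (pow_le_pow_left₀ (by norm_num) h12 m)
                            (by positivity) hMpos.le
                  · intro hn
                    exfalso
                    exact hn ⟨iff_of_false hiA (by rw [hq1]; norm_num),
                      iff_of_true hiB hq1⟩
                · by_cases hq0 : q i = 0
                  · -- q = 0, i ∈ B : strong decay
                    have hpr : p i ≤ r := by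
                      rw [hq0, sub_zero, abs_lt] at hpqi
                      linarith [hpqi.2]
                    have hsubD : ∀ c ∈ DB, β * t ≤ (cnt c : ℝ) := by
                      intro c hcmem
                      rw [hDBdef] at hcmem
                      simp only [Set.mem_setOf_eq] at hcmem
                      have h2β : (0:ℝ) ≤ (1 - 2*β) * t :=
                        mul_nonneg (by linarith only [hβ18]) htpos.le
                      linarith only [h2β, hcmem]
                    have hstrong : colProb (p i) DB ≤ M * (p i)^m * (t:ℝ)⁻¹ := by
                      refine le_trans (small_tail_head hp0i hpr hrpos hr1 hrN hβpos hNb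
                        htmβ ht1 hsubD) ?_
                      calc (p i)^m * (1/r)^m * (t:ℝ)⁻¹
                          = (1/r)^m * (p i)^m * (t:ℝ)⁻¹ := by ring
                        _ ≤ M * (p i)^m * (t:ℝ)⁻¹ := by
                            apply mul_le_mul_of_nonneg_right _ (by positivity)
                            apply mul_le_mul_of_nonneg_right hM2 (by positivity)
                    exact ⟨hweak_of DB ((p i)^m) (pow_nonneg hp0i m) hstrong, fun _ => hstrong⟩
                  · -- interior, i ∈ B : Chebyshev decay
                    obtain ⟨haq, haq1⟩ := haS i hq0 hq1
                    have hpa : a/2 ≤ p i := by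
                      rw [abs_lt] at hpqi
                      linarith
                    have hpa1 : p i ≤ 1 - a/2 := by
                      rw [abs_lt] at hpqi
                      linarith
                    have hsubD : ∀ c ∈ DB, (t:ℝ) * (a/4) ≤ |(cnt c : ℝ) - t * p i| := by
                      intro c hcmem
                      rw [hDBdef] at hcmem
                      simp only [Set.mem_setOf_eq] at hcmem
                      rw [le_abs]
                      left
                      have h2 : (t:ℝ)*(a/4) ≤ (t:ℝ)*((a/2) - β) :=
                        mul_le_mul_of_nonneg_left (by linarith only [hβa]) htpos.le
                      linarith only [h2, hcmem, mul_le_mul_of_nonneg_left hpa1 htpos.le]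
                    have hstrong : colProb (p i) DB ≤ M * (p i)^m * (t:ℝ)⁻¹ := by
                      refine le_trans (colProb_cheb hp0i hp1i (by positivity) ht1 hsubD) ?_
                      have heq : 1 / (4 * (t:ℝ) * (a/4)^2) = (4/a^2) * (t:ℝ)⁻¹ := by
                        field_simp
                      rw [heq]
                      have hone : ((2/a) * (a/2) : ℝ) = 1 := by field_simp
                      calc (4/a^2) * (t:ℝ)⁻¹ = ((2/a)^m * (a/2)^m) * (4/a^2) * (t:ℝ)⁻¹ := by
                            rw [← mul_pow, hone, one_pow, one_mul]
                        _ = ((2/a)^m * (4/a^2)) * (a/2)^m * (t:ℝ)⁻¹ := by ring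
                        _ ≤ M * (p i)^m * (t:ℝ)⁻¹ := by
                            apply mul_le_mul_of_nonneg_right _ (by positivity)
                            exact mul_le_mul hM4 (pow_le_pow_left₀ ha20 hpa m)
                              (pow_nonneg ha20 m) hMpos.le
                    exact ⟨hweak_of DB ((p i)^m) (pow_nonneg hp0i m) hstrong,
                      fun _ => hstrong⟩
              · have hΦiS : Φ i = p i * (1 - p i) := by
                  simp only [hΦdef]; rw [if_neg hiA, if_neg hiB]
                rw [if_neg hiB, hΦiS]
                by_cases hq0 : q i = 0
                · -- q = 0, i ∈ S : strong decay
                  have hpr : p i ≤ r := by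
                    rw [hq0, sub_zero, abs_lt] at hpqi
                    linarith [hpqi.2]
                  have hsubD : ∀ c ∈ DS, β * t ≤ (cnt c : ℝ) := by
                    intro c hcmem
                    rw [hDSdef] at hcmem
                    simp only [Set.mem_setOf_eq] at hcmem
                    linarith [hcmem.1]
                  have hΦp : p i / 2 ≤ p i * (1 - p i) := by
                    have h2 : (0:ℝ) ≤ p i * (1/2 - p i) :=
                      mul_nonneg hp0i (by linarith only [hpr, hr12])
                    linarith only [h2]
                  have hstrong : colProb (p i) DS ≤ M * (p i * (1 - p i))^m * (t:ℝ)⁻¹ := by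
                    refine le_trans (small_tail_head hp0i hpr hrpos hr1 hrN hβpos hNb
                      htmβ ht1 hsubD) ?_
                    calc (p i)^m * (1/r)^m * (t:ℝ)⁻¹
                        = (2/r)^m * (p i / 2)^m * (t:ℝ)⁻¹ := by
                          rw [← mul_pow, ← mul_pow]
                          congr 1
                          ring
                      _ ≤ M * (p i * (1 - p i))^m * (t:ℝ)⁻¹ := by
                          apply mul_le_mul_of_nonneg_right _ (by positivity)
                          exact mul_le_mul hM3 (pow_le_pow_left₀ (by positivity) hΦp m)
                            (pow_nonneg (by positivity) m) hMpos.le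
                  exact ⟨hweak_of DS ((p i * (1 - p i))^m) (pow_nonneg hpp0 m) hstrong,
                    fun _ => hstrong⟩
                · by_cases hq1 : q i = 1
                  · -- q = 1, i ∈ S : strong decay
                    have hpr : 1 - p i ≤ r := by
                      rw [hq1, abs_lt] at hpqi
                      linarith [hpqi.1]
                    have hsubD : ∀ c ∈ DS, β * t ≤ ((t - cnt c : ℕ) : ℝ) := by
                      intro c hcmem
                      rw [hDSdef] at hcmem
                      simp only [Set.mem_setOf_eq] at hcmem
                      rw [Nat.cast_sub (cnt_le c)]
                      linarith [hcmem.2]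
                    have hΦp : (1 - p i) / 2 ≤ p i * (1 - p i) := by
                      have h2 : (0:ℝ) ≤ (1 - p i) * (p i - 1/2) :=
                        mul_nonneg (by linarith only [hp1i]) (by linarith only [hpr, hr12])
                      linarith only [h2]
                    have hstrong : colProb (p i) DS ≤ M * (p i * (1 - p i))^m * (t:ℝ)⁻¹ := by
                      refine le_trans (small_tail_tail hp0i hp1i hpr hrpos hr1 hrN hβpos hNb
                        htmβ ht1 hsubD) ?_
                      calc (1 - p i)^m * (1/r)^m * (t:ℝ)⁻¹
                          = (2/r)^m * ((1 - p i) / 2)^m * (t:ℝ)⁻¹ := by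
                            rw [← mul_pow, ← mul_pow]
                            congr 1
                            ring
                        _ ≤ M * (p i * (1 - p i))^m * (t:ℝ)⁻¹ := by
                            apply mul_le_mul_of_nonneg_right _ (by positivity)
                            exact mul_le_mul hM3 (pow_le_pow_left₀ (by linarith only [h1p0] : (0:ℝ) ≤ (1 - p i)/2) hΦp m)
                              (pow_nonneg (by linarith only [h1p0] : (0:ℝ) ≤ (1 - p i)/2) m) hMpos.le
                    exact ⟨hweak_of DS ((p i * (1 - p i))^m) (pow_nonneg hpp0 m) hstrong,
                      fun _ => hstrong⟩
                  · -- matched interior case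
                    obtain ⟨haq, haq1⟩ := haS i hq0 hq1
                    have hpa : a/2 ≤ p i := by
                      rw [abs_lt] at hpqi
                      linarith
                    have hpa1 : p i ≤ 1 - a/2 := by
                      rw [abs_lt] at hpqi
                      linarith
                    have hΦa : a^2/4 ≤ p i * (1 - p i) := by
                      have h2 : (a/2) * (a/2) ≤ p i * (1 - p i) :=
                        mul_le_mul hpa (by linarith only [hpa1]) (by linarith only [hapos]) hp0i
                      linarith only [h2]
                    constructor
                    · calc colProb (p i) DS ≤ 1 := colProb_le_one hp0i hp1i DS
                        _ = (4/a^2)^m * (a^2/4)^m := by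
                            rw [← mul_pow]
                            field_simp
                            exact (one_pow m).symm
                        _ ≤ M * (p i * (1 - p i))^m :=
                            mul_le_mul hM5 (pow_le_pow_left₀ (by positivity) hΦa m)
                              (pow_nonneg (by positivity) m) hMpos.le
                    · intro hn
                      exfalso
                      exact hn ⟨iff_of_false hiA hq0, iff_of_false hiB hq1⟩
          obtain ⟨i₀, hi₀⟩ : ∃ i₀, ¬((i₀ ∈ A ↔ q i₀ = 0) ∧ (i₀ ∈ B ↔ q i₀ = 1)) := by
            by_contra hall
            push_neg at hall
            apply hAB0
            have hA : A = A₀ := by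
              ext i
              rw [hA₀def, Finset.mem_filter]
              have h := (hall i).1
              constructor
              · intro hi; exact ⟨Finset.mem_univ i, h.mp hi⟩
              · intro hi; exact h.mpr hi.2
            have hB : B = B₀ := by
              ext i
              rw [hB₀def, Finset.mem_filter]
              have h := (hall i).2
              constructor
              · intro hi; exact ⟨Finset.mem_univ i, h.mp hi⟩
              · intro hi; exact h.mpr hi.2
            rw [hA, hB]
          calc coinProb t p (K' ∩ {x | pt x = (A, B)})
              ≤ coinProb t p {x | ∀ i, col i x ∈ (if i ∈ A then DA else if i ∈ B then DB else DS)} :=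
                coinProb_mono hp01 hsub
            _ = ∏ i, colProb (p i) (if i ∈ A then DA else if i ∈ B then DB else DS) :=
                coinProb_factor p _
            _ ≤ ∏ i, (M * Φ i ^ m * (if i = i₀ then (t:ℝ)⁻¹ else 1)) := by
                apply Finset.prod_le_prod
                · intro i _
                  exact colProb_nonneg (hp01 i).1 (hp01 i).2 _
                · intro i _
                  by_cases hii : i = i₀
                  · rw [if_pos hii, hii]
                    exact (hcoord i₀).2 hi₀
                  · rw [if_neg hii, mul_one]
                    exact (hcoord i).1
            _ = M ^ n * (∏ i, Φ i) ^ m * (t:ℝ)⁻¹ := by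
                rw [Finset.prod_mul_distrib, Finset.prod_mul_distrib]
                rw [Finset.prod_const, Finset.prod_pow]
                simp [Finset.card_univ]
            _ = M ^ n * facePoly A B p ^ m * (t:ℝ)⁻¹ := by rw [hface]
            _ ≤ M ^ n * (f p / c) * (t:ℝ)⁻¹ := by
                apply mul_le_mul_of_nonneg_right _ (by positivity)
                apply mul_le_mul_of_nonneg_left _ (by positivity)
                rw [le_div_iff₀ hc]
                calc facePoly A B p ^ m * c = c * facePoly A B p ^ m := mul_comm _ _
                  _ ≤ f p := hflow p hpcube
            _ ≤ CST * (t:ℝ)⁻¹ * f p := by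
                rw [hCSTdef]
                have h1 : M ^ n * (f p / c) * (t:ℝ)⁻¹ = (M^n/c) * (t:ℝ)⁻¹ * f p := by ring
                rw [h1]
                apply mul_le_mul_of_nonneg_right _ hfp0
                apply mul_le_mul_of_nonneg_right _ (by positivity)
                have h2 : (0:ℝ) ≤ (n:ℝ)/(16*δ^2) / (c*κ) := by positivity
                linarith
    · -- non-disjoint patterns have empty fibers
      have hempty : K' ∩ {x | pt x = (A, B)} = ∅ := by
        rw [Set.eq_empty_iff_forall_notMem]
        rintro x ⟨hxK, hxpt⟩
        rw [Finset.not_disjoint_iff] at hdis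
        obtain ⟨i, hiA, hiB⟩ := hdis
        have h1 := (hfibpat x hxpt i).1.mp hiA
        have h2 := (hfibpat x hxpt i).2.mp hiB
        have : β ≤ δ := hβδ
        linarith
      rw [hempty, coinProb_empty]
      exact hCSTgoal0
  -- assemble
  have hmain : coinProb t p K' ≤ (7/2) * f p := by
    calc coinProb t p K'
        = ∑ AB : Finset (Fin n) × Finset (Fin n), coinProb t p (K' ∩ {x | pt x = AB}) :=
          coinProb_partition p K' pt
      _ ≤ ∑ _AB : Finset (Fin n) × Finset (Fin n), CST * (t:ℝ)⁻¹ * f p :=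
          Finset.sum_le_sum (fun AB _ => hpat AB)
      _ = κ₂ * (CST * (t:ℝ)⁻¹ * f p) := by
          rw [Finset.sum_const, nsmul_eq_mul, hκ₂def, Finset.card_univ]
      _ ≤ 1 * f p := by
          have h1 : κ₂ * CST * (t:ℝ)⁻¹ ≤ 1 := by
            rw [← div_le_one htpos] at htCST
            calc κ₂ * CST * (t:ℝ)⁻¹ = κ₂ * CST / t := by ring
              _ ≤ 1 := htCST
          calc κ₂ * (CST * (t:ℝ)⁻¹ * f p) = (κ₂ * CST * (t:ℝ)⁻¹) * f p := by ring
            _ ≤ 1 * f p := mul_le_mul_of_nonneg_right h1 hfp0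
      _ ≤ (7/2) * f p := by
          apply mul_le_mul_of_nonneg_right _ hfp0
          norm_num
  have hfinal : coinProb t p {x | 1/2 ≤ f (empAvg t x)} ≤ (7/2) * f p := hmain
  linarith
end

section
/- Let f : [0,1]^n → [0,1] be continuous and polynomially bounded, let L = {p ∈ [0,1]^n : f(p) ≤ 3/8}, and let δ ∈ (0, 1/2). Let (A,S,B) be a partition of {1,…,n}, let q ∈ F_{A,S,B} with f identically 0 on F_{A,S,B}, and let T ⊆ A ∪ B be a set such that f is NOT identically 0 on the open face F_{A∖T, S∪T, B∖T}. Then there exist a radius r > 0 and an integer t such that for every p ∈ L with ‖p − q‖_∞ < r: P_p[ X̄_{t,i} − p_i > δ/2 for all i ∈ T∩A, and p_i − X̄_{t,i} > δ/2 for all i ∈ T∩B ] ≤ f(p)/2^{n+2}. -/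
open Finset

lemma prod_ite_le' {t k : ℕ} (a b : ℝ) (h0a : 0 ≤ a) (h1a : a ≤ 1)
    (h0b : 0 ≤ b) (h1b : b ≤ 1) (P : Fin t → Prop) [DecidablePred P]
    (hk : k ≤ (univ.filter P).card) :
    ∏ s, (if P s then a else b) ≤ a ^ k := by
  rw [Finset.prod_ite (fun _ => a) (fun _ => b), Finset.prod_const, Finset.prod_const]
  calc a ^ (univ.filter P).card * b ^ (univ.filter fun s => ¬ P s).card
      ≤ a ^ k * 1 :=
        mul_le_mul (pow_le_pow_of_le_one h0a h1a hk) (pow_le_one₀ h0b h1b)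
          (pow_nonneg h0b _) (pow_nonneg h0a _)
    _ = a ^ k := mul_one _

lemma sum_indicator_le' {α : Type*} [Fintype α] (P : α → Prop) [DecidablePred P]
    (f : α → ℝ) (M : ℝ) (hM : 0 ≤ M) (h : ∀ x, P x → f x ≤ M) :
    ∑ x, (if P x then 1 else 0) * f x ≤ (Fintype.card α) * M := by
  calc ∑ x, (if P x then 1 else 0) * f x ≤ ∑ _x : α, M := by
        apply Finset.sum_le_sum; intro x _
        by_cases hx : P x
        · simpa [hx] using h x hx
        · simp [hx, hM]
    _ = Fintype.card α * M := by
        rw [Finset.sum_const, nsmul_eq_mul, Finset.card_univ]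

lemma col_sum_one' {t : ℕ} (a : ℝ) :
    ∑ y : Fin t → Bool, ∏ s, (if y s then a else 1 - a) = 1 := by
  have := Finset.prod_univ_sum (fun _ : Fin t => (univ : Finset Bool))
    (fun _ b => if b then a else 1 - a)
  simp only [Fintype.piFinset_univ] at this
  rw [← this]
  simp

lemma sum_prod_swap' {t n : ℕ} (g : Fin n → (Fin t → Bool) → ℝ) :
    ∑ x : Fin t → Fin n → Bool, ∏ i, g i (fun s => x s i)
      = ∏ i, ∑ y : Fin t → Bool, g i y := by
  rw [Finset.prod_univ_sum]
  simp only [Fintype.piFinset_univ]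
  exact Fintype.sum_equiv (Equiv.piComm fun _ _ => Bool) _ _ (fun x => rfl)

lemma coinProb_bound {n t m : ℕ} (ht : 0 < t) (p : Fin n → ℝ)
    (hp : ∀ i, 0 ≤ p i ∧ p i ≤ 1)
    (T A B : Finset (Fin n)) (hAB : Disjoint A B) (hT : T ⊆ A ∪ B)
    (δ : ℝ) (hδ0 : 0 < δ) (htδ : ((m : ℝ) + 1) ≤ t * (δ / 2)) :
    coinProb t p {x | (∀ i ∈ T ∩ A, δ / 2 < empAvg t x i - p i) ∧
               (∀ i ∈ T ∩ B, δ / 2 < p i - empAvg t x i)}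
      ≤ ∏ i ∈ T, ((2:ℝ) ^ t * (if i ∈ A then p i else 1 - p i) ^ (m + 1)) := by
  classical
  set Cond : Fin n → (Fin t → Bool) → Prop := fun i y =>
    (i ∈ T ∩ A → m + 1 ≤ (univ.filter fun s => y s = true).card) ∧
    (i ∈ T ∩ B → m + 1 ≤ (univ.filter fun s => y s = false).card) with hCond
  set g : Fin n → (Fin t → Bool) → ℝ := fun i y =>
    (if Cond i y then 1 else 0) * ∏ s, (if y s then p i else 1 - p i) with hg
  have hwnn : ∀ i (y : Fin t → Bool), 0 ≤ ∏ s, (if y s then p i else 1 - p i) := by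
    intro i y
    apply Finset.prod_nonneg; intro s _
    by_cases h : y s = true <;> simp [h]
    · exact (hp i).1
    · linarith [(hp i).2]
  have hgnn : ∀ i y, 0 ≤ g i y := by
    intro i y
    simp only [hg]
    apply mul_nonneg _ (hwnn i y)
    split <;> norm_num
  have htR : (0:ℝ) < t := by exact_mod_cast ht
  have keyA : ∀ (x : Fin t → Fin n → Bool) i, i ∈ T ∩ A → δ / 2 < empAvg t x i - p i →
      m + 1 ≤ (univ.filter fun s => x s i = true).card := by
    intro x i hi h1
    have h0 : (0:ℝ) ≤ p i := (hp i).1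
    have hsum : empAvg t x i = ((univ.filter fun s => x s i = true).card : ℝ) / t := by
      rw [empAvg, Finset.sum_boole]
    rw [hsum] at h1
    set k := (univ.filter fun s => x s i = true).card with hk
    have h2 : t * (δ / 2) < k := by
      have h3 : δ / 2 < (k : ℝ) / t := by linarith
      have := (lt_div_iff₀ htR).mp h3
      linarith
    have : ((m:ℝ) + 1) < k := lt_of_le_of_lt htδ h2
    exact_mod_cast this.le
  have keyB : ∀ (x : Fin t → Fin n → Bool) i, i ∈ T ∩ B → δ / 2 < p i - empAvg t x i →
      m + 1 ≤ (univ.filter fun s => x s i = false).card := by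
    intro x i hi h1
    have h0 : p i ≤ 1 := (hp i).2
    have hsum : empAvg t x i = ((univ.filter fun s => x s i = true).card : ℝ) / t := by
      rw [empAvg, Finset.sum_boole]
    rw [hsum] at h1
    have hcards : (univ.filter fun s => x s i = true).card
        + (univ.filter fun s => x s i = false).card = t := by
      have := Finset.card_filter_add_card_filter_not
        (s := (univ : Finset (Fin t))) (p := fun s => x s i = true)
      simp only [Bool.not_eq_true, Finset.card_univ, Fintype.card_fin] at this
      simpa using this
    set k1 := (univ.filter fun s => x s i = true).card with hk1
    set k2 := (univ.filter fun s => x s i = false).card with hk2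
    have hk2R : (k2 : ℝ) = t - k1 := by
      have : (k1 : ℝ) + k2 = t := by exact_mod_cast hcards
      linarith
    have h3 : (k1 : ℝ) / t < 1 - δ / 2 := by linarith
    have h4 : (k1 : ℝ) < t * (1 - δ / 2) := by
      have := (div_lt_iff₀ htR).mp h3
      linarith
    have : ((m:ℝ) + 1) < k2 := by
      rw [hk2R]
      have : t * (δ/2) < (t : ℝ) - k1 := by nlinarith
      linarith
    exact_mod_cast this.le
  have step1 : coinProb t p {x | (∀ i ∈ T ∩ A, δ / 2 < empAvg t x i - p i) ∧
               (∀ i ∈ T ∩ B, δ / 2 < p i - empAvg t x i)}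
      ≤ ∑ x : Fin t → Fin n → Bool, ∏ i, g i (fun s => x s i) := by
    rw [coinProb]
    apply Finset.sum_le_sum
    intro x _
    by_cases hx : x ∈ {x : Fin t → Fin n → Bool | (∀ i ∈ T ∩ A, δ / 2 < empAvg t x i - p i) ∧
               (∀ i ∈ T ∩ B, δ / 2 < p i - empAvg t x i)}
    · rw [Set.indicator_of_mem hx]
      have hcx : ∀ i, Cond i (fun s => x s i) := by
        intro i
        exact ⟨fun hiA => keyA x i hiA (hx.1 i hiA), fun hiB => keyB x i hiB (hx.2 i hiB)⟩
      have heq : flipWeight p x = ∏ i, g i (fun s => x s i) := by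
        rw [flipWeight, Finset.prod_comm]
        refine Finset.prod_congr rfl fun i _ => ?_
        simp only [hg]
        rw [if_pos (hcx i), one_mul]
      exact le_of_eq heq
    · rw [Set.indicator_of_notMem hx]
      exact Finset.prod_nonneg fun i _ => hgnn i _
  have step2 : (∑ x : Fin t → Fin n → Bool, ∏ i, g i (fun s => x s i))
      = ∏ i, ∑ y : Fin t → Bool, g i y := sum_prod_swap' g
  have hcard : (Fintype.card (Fin t → Bool) : ℝ) = 2 ^ t := by
    simp [Fintype.card_fun]
  have step3 : ∀ i, (∑ y : Fin t → Bool, g i y)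
      ≤ (if i ∈ T then (2:ℝ) ^ t * (if i ∈ A then p i else 1 - p i) ^ (m + 1) else 1) := by
    intro i
    have hp0 := (hp i).1
    have hp1 := (hp i).2
    by_cases hiT : i ∈ T
    · rcases Finset.mem_union.1 (hT hiT) with hiA | hiB
      · have hiA' : i ∈ T ∩ A := Finset.mem_inter.2 ⟨hiT, hiA⟩
        rw [if_pos hiT, if_pos hiA]
        have hb := sum_indicator_le' (Cond i) (fun y => ∏ s, (if y s then p i else 1 - p i))
          ((p i) ^ (m + 1)) (pow_nonneg hp0 _)
          (fun y hy => prod_ite_le' (p i) (1 - p i) hp0 hp1 (by linarith) (by linarith)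
            _ (hy.1 hiA'))
        calc ∑ y : Fin t → Bool, g i y
            = ∑ y : Fin t → Bool, (if Cond i y then 1 else 0)
                * ∏ s, (if y s then p i else 1 - p i) := by simp only [hg]
          _ ≤ (Fintype.card (Fin t → Bool)) * (p i) ^ (m + 1) := hb
          _ = 2 ^ t * (p i) ^ (m + 1) := by rw [← hcard]
      · have hiB' : i ∈ T ∩ B := Finset.mem_inter.2 ⟨hiT, hiB⟩
        have hiA : i ∉ A := fun h => (Finset.disjoint_left.mp hAB h) hiB
        rw [if_pos hiT, if_neg hiA]
        have hrw : ∀ y : Fin t → Bool, (∏ s, (if y s then p i else 1 - p i))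
            = ∏ s, (if y s = false then 1 - p i else p i) :=
          fun y => Finset.prod_congr rfl (fun s _ => by cases h : y s <;> simp [h])
        have hb := sum_indicator_le' (Cond i)
          (fun y => ∏ s, (if y s = false then 1 - p i else p i))
          ((1 - p i) ^ (m + 1)) (pow_nonneg (by linarith) _)
          (fun y hy => prod_ite_le' (1 - p i) (p i) (by linarith) (by linarith) hp0 hp1
            _ (hy.2 hiB'))
        calc ∑ y : Fin t → Bool, g i y
            = ∑ y : Fin t → Bool, (if Cond i y then 1 else 0)
                * ∏ s, (if y s = false then 1 - p i else p i) := by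
              refine Finset.sum_congr rfl fun y _ => ?_
              simp only [hg]; rw [hrw y]
          _ ≤ (Fintype.card (Fin t → Bool)) * (1 - p i) ^ (m + 1) := hb
          _ = 2 ^ t * (1 - p i) ^ (m + 1) := by rw [← hcard]
    · rw [if_neg hiT]
      calc ∑ y : Fin t → Bool, g i y
          ≤ ∑ y : Fin t → Bool, ∏ s, (if y s then p i else 1 - p i) := by
            apply Finset.sum_le_sum
            intro y _
            simp only [hg]
            by_cases h : Cond i y
            · rw [if_pos h, one_mul]
            · rw [if_neg h, zero_mul]; exact hwnn i y
        _ = 1 := col_sum_one' (p i)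
  calc coinProb t p _ ≤ ∑ x : Fin t → Fin n → Bool, ∏ i, g i (fun s => x s i) := step1
    _ = ∏ i, ∑ y : Fin t → Bool, g i y := step2
    _ ≤ ∏ i, (if i ∈ T then (2:ℝ) ^ t * (if i ∈ A then p i else 1 - p i) ^ (m + 1) else 1) :=
        Finset.prod_le_prod (fun i _ => Finset.sum_nonneg fun y _ => hgnn i y)
          (fun i _ => step3 i)
    _ = ∏ i ∈ T, ((2:ℝ) ^ t * (if i ∈ A then p i else 1 - p i) ^ (m + 1)) := by
        rw [Finset.prod_ite_mem, Finset.univ_inter]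

lemma facePoly_lb {n : ℕ} (A B T : Finset (Fin n)) (hAB : Disjoint A B) (hT : T ⊆ A ∪ B)
    (p q : Fin n → ℝ) (hp : ∀ i, 0 ≤ p i ∧ p i ≤ 1)
    (hq : ∀ i, 0 ≤ q i ∧ q i ≤ 1)
    (μ r : ℝ) (hμ0 : 0 < μ) (hμhalf : μ ≤ 1/2) (hrμ : r ≤ μ) (hr2 : r ≤ 1/2)
    (hεS : ∀ i, i ∉ A ∪ B → 2 * μ ≤ q i * (1 - q i))
    (hpq : ∀ i, |p i - q i| < r)
    (hA0 : ∀ i ∈ A, p i < r) (hB1 : ∀ i ∈ B, 1 - p i < r) :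
    μ ^ n * (∏ i ∈ T, (if i ∈ A then p i else 1 - p i)) ≤ facePoly (A \ T) (B \ T) p := by
  classical
  set F : Fin n → ℝ := fun i =>
    if i ∈ A \ T then (1 - p i) else if i ∈ B \ T then p i else p i * (1 - p i) with hF
  have hdisj : Disjoint (A \ T) (B \ T) :=
    hAB.mono (Finset.sdiff_subset) (Finset.sdiff_subset)
  have e1 : ∏ i ∈ A \ T, F i = ∏ i ∈ A \ T, (1 - p i) :=
    Finset.prod_congr rfl fun i hi => by simp only [hF]; rw [if_pos hi]
  have e2 : ∏ i ∈ B \ T, F i = ∏ i ∈ B \ T, p i :=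
    Finset.prod_congr rfl fun i hi => by
      simp only [hF]
      rw [if_neg (fun h => Finset.disjoint_left.mp hdisj h hi), if_pos hi]
  have e3 : ∏ i ∈ ((A \ T) ∪ (B \ T))ᶜ, F i = ∏ i ∈ ((A \ T) ∪ (B \ T))ᶜ, p i * (1 - p i) :=
    Finset.prod_congr rfl fun i hi => by
      simp only [hF]
      have hi' := Finset.mem_compl.mp hi
      rw [if_neg (fun h => hi' (Finset.mem_union_left _ h)),
        if_neg (fun h => hi' (Finset.mem_union_right _ h))]
  have hfp_eq : facePoly (A \ T) (B \ T) p = ∏ i, F i := by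
    rw [facePoly, ← Finset.prod_mul_prod_compl ((A \ T) ∪ (B \ T)) F,
      Finset.prod_union hdisj, e1, e2, e3]
    ring
  rw [hfp_eq]
  have lhs_eq : μ ^ n * (∏ i ∈ T, (if i ∈ A then p i else 1 - p i))
      = ∏ i, (μ * (if i ∈ T then (if i ∈ A then p i else 1 - p i) else 1)) := by
    rw [Finset.prod_mul_distrib, Finset.prod_const, Finset.card_univ, Fintype.card_fin,
      Finset.prod_ite_mem, Finset.univ_inter]
  rw [lhs_eq]
  apply Finset.prod_le_prod
  · intro i _
    apply mul_nonneg hμ0.le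
    split
    · split
      · exact (hp i).1
      · linarith [(hp i).2]
    · norm_num
  · intro i _
    have hp0 := (hp i).1
    have hp1 := (hp i).2
    simp only [hF]
    by_cases hiA' : i ∈ A \ T
    · rw [if_pos hiA']
      obtain ⟨hiA, hiT⟩ := Finset.mem_sdiff.mp hiA'
      rw [if_neg hiT]
      have := hA0 i hiA
      nlinarith
    · rw [if_neg hiA']
      by_cases hiB' : i ∈ B \ T
      · rw [if_pos hiB']
        obtain ⟨hiB, hiT⟩ := Finset.mem_sdiff.mp hiB'
        rw [if_neg hiT]
        have := hB1 i hiB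
        nlinarith
      · rw [if_neg hiB']
        by_cases hiT : i ∈ T
        · rw [if_pos hiT]
          rcases Finset.mem_union.mp (hT hiT) with hiA | hiB
          · rw [if_pos hiA]
            have := hA0 i hiA
            nlinarith
          · have hiA : i ∉ A := fun h => (Finset.disjoint_left.mp hAB h) hiB
            rw [if_neg hiA]
            have := hB1 i hiB
            nlinarith
        · rw [if_neg hiT]
          rw [mul_one]
          have hiAB : i ∉ A ∪ B := by
            intro h
            rcases Finset.mem_union.mp h with h | h
            · exact hiA' (Finset.mem_sdiff.mpr ⟨h, hiT⟩)
            · exact hiB' (Finset.mem_sdiff.mpr ⟨h, hiT⟩)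
          have h1 := hεS i hiAB
          have h2 := hpq i
          have h3 := abs_lt.mp h2
          have hq0 := (hq i).1
          have hq1 := (hq i).2
          have key : p i * (1 - p i) - q i * (1 - q i) = (p i - q i) * (1 - p i - q i) := by
            ring
          nlinarith [h3.1, h3.2, mul_self_nonneg (p i - q i)]

theorem stmt5 {n : ℕ} (f : (Fin n → ℝ) → ℝ)
    (hrange : ∀ p ∈ cube n, f p ∈ Set.Icc (0 : ℝ) 1)
    (hcont : ContinuousOn f (cube n))
    (hpb : PolyBounded f)
    (L : Set (Fin n → ℝ)) (hL : L = {p ∈ cube n | f p ≤ 3 / 8})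
    (δ : ℝ) (hδ0 : 0 < δ) (hδhalf : δ < 1 / 2)
    (A B : Finset (Fin n)) (hAB : Disjoint A B)
    (q : Fin n → ℝ) (hq : q ∈ face A B)
    (hzero : ∀ p ∈ face A B, f p = 0)
    (T : Finset (Fin n)) (hT : T ⊆ A ∪ B)
    (hnz : ¬ ∀ p ∈ face (A \ T) (B \ T), f p = 0) :
    ∃ r : ℝ, 0 < r ∧ ∃ t : ℕ, ∀ p ∈ L, ‖p - q‖ < r →
      coinProb t p
          {x | (∀ i ∈ T ∩ A, δ / 2 < empAvg t x i - p i) ∧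
               (∀ i ∈ T ∩ B, δ / 2 < p i - empAvg t x i)}
        ≤ f p / 2 ^ (n + 2) := by
  classical
  obtain ⟨m, c, hc, hpoly⟩ := hpb
  have hTne : T.Nonempty := by
    rcases T.eq_empty_or_nonempty with h | h
    · exfalso
      subst h
      simp only [Finset.sdiff_empty] at hnz
      exact hnz hzero
    · exact h
  obtain ⟨i0, hi0⟩ := hTne
  obtain ⟨hqA, hqB, hqS⟩ := hq
  have hqcube : ∀ i, 0 ≤ q i ∧ q i ≤ 1 := by
    intro i
    by_cases hA : i ∈ A
    · rw [hqA i hA]; norm_num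
    · by_cases hB : i ∈ B
      · rw [hqB i hB]; norm_num
      · have := hqS i (by simp [hA, hB])
        constructor <;> linarith [this.1, this.2]
  -- ε : uniform lower bound of q i (1 - q i) on S, and ε ≤ 1
  set E1 : Finset ℝ := insert 1 ((A ∪ B)ᶜ.image fun i => q i * (1 - q i)) with hE1
  have hE1ne : E1.Nonempty := ⟨1, Finset.mem_insert_self _ _⟩
  set ε : ℝ := E1.min' hE1ne with hεdef
  have hεpos : 0 < ε := by
    rw [hεdef, Finset.lt_min'_iff]
    intro b hb
    rcases Finset.mem_insert.1 hb with h | h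
    · rw [h]; norm_num
    · obtain ⟨i, hi, rfl⟩ := Finset.mem_image.1 h
      have := hqS i (Finset.mem_compl.mp hi)
      nlinarith [this.1, this.2]
  have hε1 : ε ≤ 1 := Finset.min'_le _ _ (Finset.mem_insert_self _ _)
  have hεS : ∀ i, i ∉ A ∪ B → ε ≤ q i * (1 - q i) := fun i hi =>
    Finset.min'_le _ _ (Finset.mem_insert_of_mem
      (Finset.mem_image_of_mem _ (Finset.mem_compl.mpr hi)))
  set μ : ℝ := ε / 4 with hμdef
  have hμ0 : 0 < μ := by positivity
  have hμhalf : μ ≤ 1/2 := by rw [hμdef]; linarith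
  -- choose t
  set t : ℕ := max 1 ⌈(2 * ((m : ℝ) + 1)) / δ⌉₊ with htdef
  have htpos : 0 < t := lt_of_lt_of_le one_pos (le_max_left _ _)
  have htδ : ((m : ℝ) + 1) ≤ t * (δ / 2) := by
    have h1 : (2 * ((m : ℝ) + 1)) / δ ≤ (⌈(2 * ((m : ℝ) + 1)) / δ⌉₊ : ℝ) := Nat.le_ceil _
    have h2 : ((⌈(2 * ((m : ℝ) + 1)) / δ⌉₊ : ℕ) : ℝ) ≤ (t : ℝ) := by
      have h2' : ⌈(2 * ((m : ℝ) + 1)) / δ⌉₊ ≤ t := le_max_right _ _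
      exact_mod_cast h2'
    have h3 : (2 * ((m : ℝ) + 1)) ≤ (t : ℝ) * δ := by
      have := (div_le_iff₀ hδ0).mp (le_trans h1 h2)
      linarith
    linarith
  set K : ℝ := ((2:ℝ) ^ t) ^ n with hKdef
  have hK0 : 0 < K := by positivity
  set r : ℝ := min μ (c * μ ^ (n * m) / (K * 2 ^ (n + 2))) with hrdef
  have hr0 : 0 < r := lt_min hμ0 (by positivity)
  refine ⟨r, hr0, t, ?_⟩
  intro p hp hpr
  rw [hL] at hp
  obtain ⟨hpc, hpf⟩ := hp
  have hpcube : ∀ i, 0 ≤ p i ∧ p i ≤ 1 := hpc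
  have hpq : ∀ i, |p i - q i| < r := by
    intro i
    have h := norm_le_pi_norm (p - q) i
    simp only [Pi.sub_apply, Real.norm_eq_abs] at h
    exact lt_of_le_of_lt h hpr
  have hrμ : r ≤ μ := min_le_left _ _
  have hr2 : r ≤ 1/2 := le_trans hrμ hμhalf
  have hA0 : ∀ i ∈ A, p i < r := by
    intro i hi
    have := abs_lt.mp (hpq i)
    rw [hqA i hi] at this
    linarith [this.2]
  have hB1 : ∀ i ∈ B, 1 - p i < r := by
    intro i hi
    have := abs_lt.mp (hpq i)
    rw [hqB i hi] at this
    linarith [this.1]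
  have hεS' : ∀ i, i ∉ A ∪ B → 2 * μ ≤ q i * (1 - q i) := by
    intro i hi
    have := hεS i hi
    rw [hμdef]
    linarith
  -- facePoly lower bound
  set Q : ℝ := ∏ i ∈ T, (if i ∈ A then p i else 1 - p i) with hQdef
  have hQ0 : 0 ≤ Q := by
    apply Finset.prod_nonneg
    intro i _
    split
    · exact (hpcube i).1
    · linarith [(hpcube i).2]
  have hQ1 : ∀ i ∈ T, (if i ∈ A then p i else 1 - p i) ≤ 1 := by
    intro i _
    split
    · exact (hpcube i).2
    · linarith [(hpcube i).1]
  have hQr : Q ≤ r := by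
    have h1 : (if i0 ∈ A then p i0 else 1 - p i0) ≤ r := by
      rcases Finset.mem_union.1 (hT hi0) with h | h
      · rw [if_pos h]; exact (hA0 i0 h).le
      · rw [if_neg (fun hA' => (Finset.disjoint_left.mp hAB hA') h)]
        exact (hB1 i0 h).le
    calc Q = (if i0 ∈ A then p i0 else 1 - p i0)
          * ∏ i ∈ T.erase i0, (if i ∈ A then p i else 1 - p i) :=
          (Finset.mul_prod_erase T _ hi0).symm
      _ ≤ r * 1 := by
          apply mul_le_mul h1 _ _ hr0.le
          · apply Finset.prod_le_one
            · intro i hi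
              split
              · exact (hpcube i).1
              · linarith [(hpcube i).2]
            · intro i hi
              exact hQ1 i (Finset.mem_of_mem_erase hi)
          · apply Finset.prod_nonneg
            intro i _
            split
            · exact (hpcube i).1
            · linarith [(hpcube i).2]
      _ = r := mul_one r
  have hface : μ ^ n * Q ≤ facePoly (A \ T) (B \ T) p :=
    facePoly_lb A B T hAB hT p q hpcube hqcube μ r hμ0 hμhalf hrμ hr2 hεS' hpq hA0 hB1
  have hdisj : Disjoint (A \ T) (B \ T) :=
    hAB.mono (Finset.sdiff_subset) (Finset.sdiff_subset)
  have hfplb : c * (μ ^ n * Q) ^ m ≤ f p := by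
    calc c * (μ ^ n * Q) ^ m ≤ c * (facePoly (A \ T) (B \ T) p) ^ m := by
          apply mul_le_mul_of_nonneg_left _ hc.le
          exact pow_le_pow_left₀ (by positivity) hface m
      _ ≤ f p := hpoly (A \ T) (B \ T) hdisj hnz p hpc
  -- main chain
  have hbound := coinProb_bound htpos p hpcube T A B hAB hT δ hδ0 htδ
  have h12 : (1:ℝ) ≤ 2 ^ t := by
    calc (1:ℝ) = 1 ^ t := (one_pow t).symm
      _ ≤ 2 ^ t := pow_le_pow_left₀ (by norm_num) (by norm_num) t
  have hKT : ((2:ℝ) ^ t) ^ T.card ≤ K := by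
    rw [hKdef]
    exact pow_le_pow_right₀ h12 (by simpa using Finset.card_le_univ T)
  calc coinProb t p
        {x | (∀ i ∈ T ∩ A, δ / 2 < empAvg t x i - p i) ∧
             (∀ i ∈ T ∩ B, δ / 2 < p i - empAvg t x i)}
      ≤ ∏ i ∈ T, ((2:ℝ) ^ t * (if i ∈ A then p i else 1 - p i) ^ (m + 1)) := hbound
    _ = ((2:ℝ) ^ t) ^ T.card * Q ^ (m + 1) := by
        rw [Finset.prod_mul_distrib, Finset.prod_const, Finset.prod_pow, hQdef]
    _ ≤ K * (Q ^ m * Q) := by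
        rw [pow_succ]
        exact mul_le_mul_of_nonneg_right hKT (mul_nonneg (pow_nonneg hQ0 m) hQ0)
    _ ≤ K * (Q ^ m * r) :=
        mul_le_mul_of_nonneg_left
          (mul_le_mul_of_nonneg_left hQr (pow_nonneg hQ0 m)) hK0.le
    _ = (K * r) * Q ^ m := by ring
    _ ≤ (c * μ ^ (n * m) / 2 ^ (n + 2)) * Q ^ m := by
        apply mul_le_mul_of_nonneg_right _ (pow_nonneg hQ0 m)
        have hr' : r ≤ c * μ ^ (n * m) / (K * 2 ^ (n + 2)) := min_le_right _ _
        calc K * r ≤ K * (c * μ ^ (n * m) / (K * 2 ^ (n + 2))) :=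
              mul_le_mul_of_nonneg_left hr' hK0.le
          _ = c * μ ^ (n * m) / 2 ^ (n + 2) := by
              field_simp
    _ = c * (μ ^ n * Q) ^ m / 2 ^ (n + 2) := by
        rw [mul_pow, ← pow_mul]
        ring
    _ ≤ f p / 2 ^ (n + 2) := by
        exact (div_le_div_iff_of_pos_right (by positivity)).mpr hfplb
end

section
/- Let K ⊆ [0,1]^n be compact and let f : K → [0,1] be polynomially bounded on K. Let (A,S,B) be a partition of {1,…,n}. If p ∈ K ∩ F_{A,S,B} and f(p) = 0, then f(q) = 0 for every q ∈ K ∩ cl(F_{A,S,B}), where cl(F_{A,S,B}) = {x ∈ [0,1]^n : x_i = 0 for i ∈ A, x_i = 1 for i ∈ B} is the topological closure of F_{A,S,B}. -/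
open Finset

/-- A function `f : K → [0,1]` is polynomially bounded on the compact subdomain `K`. -/
def PolyBoundedOn {n : ℕ} (K : Set (Fin n → ℝ)) (f : (Fin n → ℝ) → ℝ) : Prop :=
  ∃ (m : ℕ) (c : ℝ), 0 < c ∧ ∀ A B : Finset (Fin n), Disjoint A B →
    (∃ q ∈ K ∩ face A B, 0 < f q) →
    ∀ p ∈ K, c * facePoly A B p ^ m ≤ f p

/-- The topological closure of the open face `F_{A,S,B}`. -/
def clFace {n : ℕ} (A B : Finset (Fin n)) : Set (Fin n → ℝ) :=
  {x ∈ cube n | (∀ i ∈ A, x i = 0) ∧ ∀ i ∈ B, x i = 1}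

theorem stmt8 {n : ℕ} (K : Set (Fin n → ℝ))
    (hKcube : K ⊆ cube n) (hKcomp : IsCompact K)
    (f : (Fin n → ℝ) → ℝ)
    (hrange : ∀ p ∈ K, f p ∈ Set.Icc (0 : ℝ) 1)
    (hpb : PolyBoundedOn K f)
    (A B : Finset (Fin n)) (hAB : Disjoint A B)
    (p : Fin n → ℝ) (hp : p ∈ K ∩ face A B) (hfp : f p = 0) :
    ∀ q ∈ K ∩ clFace A B, f q = 0 := by
  classical
  rintro q ⟨hqK, hqcube, hqA, hqB⟩
  have hq0 : 0 ≤ f q := (hrange q hqK).1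
  by_contra hne
  have hfq : 0 < f q := lt_of_le_of_ne hq0 (Ne.symm hne)
  obtain ⟨m, c, hc, hbound⟩ := hpb
  set A' : Finset (Fin n) := Finset.univ.filter (fun i => q i = 0) with hA'
  set B' : Finset (Fin n) := Finset.univ.filter (fun i => q i = 1) with hB'
  have hmemA' : ∀ i, i ∈ A' ↔ q i = 0 := by simp [hA']
  have hmemB' : ∀ i, i ∈ B' ↔ q i = 1 := by simp [hB']
  have hdisj : Disjoint A' B' := by
    rw [Finset.disjoint_left]
    intro i hi hi'
    rw [hmemA'] at hi; rw [hmemB'] at hi'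
    norm_num [hi] at hi'
  have hqface : q ∈ face A' B' := by
    refine ⟨fun i hi => (hmemA' i).1 hi, fun i hi => (hmemB' i).1 hi, fun i hi => ?_⟩
    simp only [Finset.mem_union, hmemA', hmemB', not_or] at hi
    obtain ⟨h0, h1⟩ := hi
    exact ⟨lt_of_le_of_ne (hqcube i).1 (Ne.symm h0), lt_of_le_of_ne (hqcube i).2 h1⟩
  have hfine := hbound A' B' hdisj ⟨q, ⟨hqK, hqface⟩, hfq⟩ p hp.1
  obtain ⟨hpK, hpA, hpB, hpS⟩ : p ∈ K ∩ face A B := hp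
  -- facePoly A' B' p > 0
  have hAsub : A ⊆ A' := fun i hi => (hmemA' i).2 (hqA i hi)
  have hBsub : B ⊆ B' := fun i hi => (hmemB' i).2 (hqB i hi)
  have hp01 : ∀ i, 0 ≤ p i ∧ p i ≤ 1 := hKcube hpK
  have hlt1 : ∀ i ∈ A', p i < 1 := by
    intro i hi
    have hiB : i ∉ B := by
      intro h
      have := (hmemA' i).1 hi
      have := hqB i h
      linarith
    by_cases hiA : i ∈ A
    · rw [hpA i hiA]; norm_num
    · exact (hpS i (by simp [hiA, hiB])).2
  have hgt0 : ∀ i ∈ B', 0 < p i := by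
    intro i hi
    have hiA : i ∉ A := by
      intro h
      have := (hmemB' i).1 hi
      have := hqA i h
      linarith
    by_cases hiB : i ∈ B
    · rw [hpB i hiB]; norm_num
    · exact (hpS i (by simp [hiA, hiB])).1
  have hmid : ∀ i ∈ (A' ∪ B')ᶜ, 0 < p i * (1 - p i) := by
    intro i hi
    simp only [Finset.mem_compl, Finset.mem_union, not_or] at hi
    have hiA : i ∉ A := fun h => hi.1 (hAsub h)
    have hiB : i ∉ B := fun h => hi.2 (hBsub h)
    have := hpS i (by simp [hiA, hiB])
    nlinarith [this.1, this.2]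
  have hpos : 0 < facePoly A' B' p := by
    unfold facePoly
    have h1 : 0 < ∏ i ∈ A', (1 - p i) :=
      Finset.prod_pos (fun i hi => by linarith [hlt1 i hi])
    have h2 : 0 < ∏ i ∈ (A' ∪ B')ᶜ, p i * (1 - p i) := Finset.prod_pos hmid
    have h3 : 0 < ∏ i ∈ B', p i := Finset.prod_pos hgt0
    positivity
  have : 0 < c * facePoly A' B' p ^ m := by positivity
  linarith [hfine, hfp.symm ▸ hfine]
end

section
/- Let n, k be integers with 1 ≤ k < n and K = {p ∈ [0,1]^n : Σ_{i=1}^n p_i = k}. If p ∈ K and p ≠ e_V for every V ⊆ {1,…,n} with |V| = k, then Σ_{V ⊆ {1,…,n}, |V| = k} g_V(p) > 0. -/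
open Finset

/-- The domain `K = {p ∈ [0,1]^n : ∑ i, p i = k}`. -/
def Ksimplex (n k : ℕ) : Set (Fin n → ℝ) :=
  {p | (∀ i, 0 ≤ p i ∧ p i ≤ 1) ∧ ∑ i, p i = (k : ℝ)}

/-- `g_U(x) = (1/(n-k)) · ∏_{i∈U} x_i · ∏_{i∉U} (1-x_i) · ∑_{i∉U} x_i`. -/
noncomputable def gSampford (n k : ℕ) (U : Finset (Fin n)) (x : Fin n → ℝ) : ℝ :=
  (1 / ((n : ℝ) - (k : ℝ))) * (∏ i ∈ U, x i) * (∏ i ∈ Uᶜ, (1 - x i)) * (∑ i ∈ Uᶜ, x i)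

/-- `∑_{V ⊆ [n], |V| = k} g_V(x)`. -/
noncomputable def sumg (n k : ℕ) (x : Fin n → ℝ) : ℝ :=
  ∑ V ∈ Finset.powersetCard k (Finset.univ : Finset (Fin n)), gSampford n k V x

/-- The indicator vector `e_U` of a subset `U`. -/
def eU {n : ℕ} (U : Finset (Fin n)) : Fin n → ℝ := fun i => if i ∈ U then 1 else 0

theorem stmt10 (n k : ℕ) (hk : 1 ≤ k) (hkn : k < n)
    (p : Fin n → ℝ) (hp : p ∈ Ksimplex n k)
    (hvert : ∀ V : Finset (Fin n), V.card = k → p ≠ eU V) :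
    0 < sumg n k p := by
  obtain ⟨hbd, hsum⟩ := hp
  have hnk : (0:ℝ) < (n:ℝ) - k := by
    have : (k:ℝ) < n := by exact_mod_cast hkn
    linarith
  -- A = indices with p i = 1, B = indices with p i > 0
  set A : Finset (Fin n) := Finset.univ.filter (fun i => p i = 1) with hA
  set B : Finset (Fin n) := Finset.univ.filter (fun i => 0 < p i) with hB
  have hAB : A ⊆ B := by
    intro i hi
    simp only [hA, hB, Finset.mem_filter, Finset.mem_univ, true_and] at *
    rw [hi]; norm_num
  -- sum over any set is at most its card, at least card of its "=1" part
  have hsumB : ∑ i ∈ B, p i = (k:ℝ) := by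
    rw [← hsum]
    apply Finset.sum_subset (Finset.subset_univ B)
    intro i _ hiB
    simp only [hB, Finset.mem_filter, Finset.mem_univ, true_and, not_lt] at hiB
    linarith [(hbd i).1]
  have hcardB : k < B.card := by
    by_contra h
    push_neg at h
    have hle : ∑ i ∈ B, p i ≤ (B.card : ℝ) := by
      calc ∑ i ∈ B, p i ≤ ∑ i ∈ B, (1:ℝ) := Finset.sum_le_sum (fun i _ => (hbd i).2)
        _ = B.card := by simp
    have hkB : (k:ℝ) ≤ B.card := by rw [hsumB] at hle; exact hle
    have hBk : B.card = k := le_antisymm h (by exact_mod_cast hkB)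
    -- then each p i = 1 on B, so p = eU B
    have hall : ∀ i ∈ B, p i = 1 := by
      by_contra hc
      push_neg at hc
      obtain ⟨j, hjB, hj⟩ := hc
      have hjlt : p j < 1 := lt_of_le_of_ne (hbd j).2 hj
      have : ∑ i ∈ B, p i < ∑ i ∈ B, (1:ℝ) :=
        Finset.sum_lt_sum (fun i _ => (hbd i).2) ⟨j, hjB, hjlt⟩
      rw [hsumB] at this
      simp [hBk] at this
    exact hvert B hBk (by
      funext i
      by_cases hi : i ∈ B
      · simp [eU, hi, hall i hi]
      · simp only [hB, Finset.mem_filter, Finset.mem_univ, true_and, not_lt] at hi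
        simp only [eU]
        rw [if_neg (by simpa [hB, Finset.mem_filter] using not_lt.mpr hi)]
        linarith [(hbd i).1])
  have hcardA : A.card ≤ k := by
    by_contra h
    push_neg at h
    have : (A.card : ℝ) ≤ ∑ i ∈ A, p i := by
      rw [Finset.sum_congr rfl (fun i hi => by
        simp only [hA, Finset.mem_filter] at hi; exact hi.2)]
      simp
    have hAsum : ∑ i ∈ A, p i ≤ (k:ℝ) := by
      rw [← hsum]
      exact Finset.sum_le_sum_of_subset_of_nonneg (Finset.subset_univ A)
        (fun i _ _ => (hbd i).1)
    have : (A.card : ℝ) ≤ k := le_trans this hAsum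
    have : A.card ≤ k := by exact_mod_cast this
    omega
  obtain ⟨V, hAV, hVB, hVcard⟩ := Finset.exists_subsuperset_card_eq hAB hcardA hcardB.le
  -- key positivity facts about V
  have hVpos : ∀ i ∈ V, 0 < p i := by
    intro i hi
    have := hVB hi
    simpa [hB, Finset.mem_filter] using this
  have hVclt : ∀ i ∈ Vᶜ, p i < 1 := by
    intro i hi
    rw [Finset.mem_compl] at hi
    have : i ∉ A := fun h => hi (hAV h)
    simp only [hA, Finset.mem_filter, Finset.mem_univ, true_and] at this
    exact lt_of_le_of_ne (hbd i).2 this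
  obtain ⟨j, hjB, hjV⟩ : ∃ j, j ∈ B ∧ j ∉ V := by
    by_contra h
    push_neg at h
    have : B ⊆ V := fun x hx => h x hx
    have := Finset.card_le_card this
    omega
  have hjc : j ∈ Vᶜ := Finset.mem_compl.mpr hjV
  have hjpos : 0 < p j := by simpa [hB, Finset.mem_filter] using hjB
  have hgV : 0 < gSampford n k V p := by
    unfold gSampford
    apply mul_pos
    apply mul_pos
    apply mul_pos
    · positivity
    · exact Finset.prod_pos hVpos
    · exact Finset.prod_pos (fun i hi => by linarith [hVclt i hi])
    · exact Finset.sum_pos' (fun i _ => (hbd i).1) ⟨j, hjc, hjpos⟩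
  unfold sumg
  apply Finset.sum_pos'
  · intro U _
    unfold gSampford
    have h1 : 0 ≤ ∏ i ∈ U, p i := Finset.prod_nonneg (fun i _ => (hbd i).1)
    have h2 : 0 ≤ ∏ i ∈ Uᶜ, (1 - p i) := Finset.prod_nonneg (fun i _ => by linarith [(hbd i).2])
    have h3 : 0 ≤ ∑ i ∈ Uᶜ, p i := Finset.sum_nonneg (fun i _ => (hbd i).1)
    have h0 : 0 ≤ 1 / ((n:ℝ) - k) := by positivity
    positivity
  · exact ⟨V, by simp [Finset.mem_powersetCard, hVcard], hgV⟩
end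

section
/- Let n, k be integers with 1 ≤ k < n and K = {p ∈ [0,1]^n : Σ_{i=1}^n p_i = k}. Then for every p ∈ K and every coordinate i ∈ {1,…,n}: Σ_{U ⊆ {1,…,n}, |U| = k, i ∈ U} g_U(p) = p_i · Σ_{V ⊆ {1,…,n}, |V| = k} g_V(p). (Equivalently, Sampford sampling selects each element i with probability exactly p_i.) -/
open Finset

theorem stmt11 (n k : ℕ) (hk : 1 ≤ k) (hkn : k < n) :
    ∀ p ∈ Ksimplex n k, ∀ i : Fin n,
      ∑ U ∈ (Finset.powersetCard k (Finset.univ : Finset (Fin n))).filter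
          (fun U => i ∈ U), gSampford n k U p
        = p i * sumg n k p := by
  intro p hp i
  obtain ⟨hp01, hsum⟩ := hp
  set A := Finset.powersetCard k (Finset.univ : Finset (Fin n)) with hA
  -- for V of card k, ∑_{j∉V} p j = ∑_{j∈V} (1 - p j), using the constraint
  have hS : ∀ V ∈ A, (∑ j ∈ Vᶜ, p j) = ∑ j ∈ V, (1 - p j) := by
    intro V hV
    have hcard : V.card = k := (Finset.mem_powersetCard.mp hV).2
    have h1 : (∑ j ∈ V, p j) + ∑ j ∈ Vᶜ, p j = (k : ℝ) := by
      rw [Finset.sum_add_sum_compl V p]; exact hsum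
    have h2 : ∑ j ∈ V, (1 - p j) = (k : ℝ) - ∑ j ∈ V, p j := by
      rw [Finset.sum_sub_distrib, Finset.sum_const, hcard, nsmul_eq_mul, mul_one]
    linarith
  -- the core bijection identity (pure polynomial identity)
  have key2 : ∑ U ∈ A.filter (fun U => i ∈ U), ∑ j ∈ Uᶜ,
        (1 - p i) * (p j * ((∏ u ∈ U, p u) * (∏ u ∈ Uᶜ, (1 - p u))))
      = ∑ V ∈ A.filter (fun V => i ∉ V), ∑ j ∈ V,
        p i * ((1 - p j) * ((∏ v ∈ V, p v) * (∏ v ∈ Vᶜ, (1 - p v)))) := by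
    rw [Finset.sum_sigma', Finset.sum_sigma']
    refine Finset.sum_nbij' (fun x => ⟨insert x.2 (x.1.erase i), x.2⟩)
      (fun y => ⟨insert i (y.1.erase y.2), y.2⟩) ?_ ?_ ?_ ?_ ?_
    · rintro ⟨U, j⟩ hx
      rw [Finset.mem_sigma, Finset.mem_filter, Finset.mem_powersetCard] at hx
      obtain ⟨⟨⟨-, hcard⟩, hiU⟩, hj⟩ := hx
      rw [Finset.mem_compl] at hj
      have hjne : j ∉ U.erase i := fun h => hj (Finset.mem_of_mem_erase h)
      rw [Finset.mem_sigma, Finset.mem_filter, Finset.mem_powersetCard]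
      refine ⟨⟨⟨Finset.subset_univ _, ?_⟩, ?_⟩, Finset.mem_insert_self _ _⟩
      · rw [Finset.card_insert_of_notMem hjne, Finset.card_erase_of_mem hiU, hcard]
        omega
      · intro hmem
        rcases Finset.mem_insert.mp hmem with h | h
        · exact hj (h ▸ hiU)
        · exact (Finset.mem_erase.mp h).1 rfl
    · rintro ⟨V, j⟩ hy
      rw [Finset.mem_sigma, Finset.mem_filter, Finset.mem_powersetCard] at hy
      obtain ⟨⟨⟨-, hcard⟩, hiV⟩, hj⟩ := hy
      have hine : i ∉ V.erase j := fun h => hiV (Finset.mem_of_mem_erase h)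
      rw [Finset.mem_sigma, Finset.mem_filter, Finset.mem_powersetCard]
      refine ⟨⟨⟨Finset.subset_univ _, ?_⟩, Finset.mem_insert_self _ _⟩, ?_⟩
      · rw [Finset.card_insert_of_notMem hine, Finset.card_erase_of_mem hj, hcard]
        omega
      · rw [Finset.mem_compl]
        intro hmem
        rcases Finset.mem_insert.mp hmem with h | h
        · exact hiV (h ▸ hj)
        · exact (Finset.mem_erase.mp h).1 rfl
    · rintro ⟨U, j⟩ hx
      rw [Finset.mem_sigma, Finset.mem_filter] at hx
      obtain ⟨⟨-, hiU⟩, hj⟩ := hx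
      rw [Finset.mem_compl] at hj
      have hjne : j ∉ U.erase i := fun h => hj (Finset.mem_of_mem_erase h)
      simp only [Finset.erase_insert hjne, Finset.insert_erase hiU]
    · rintro ⟨V, j⟩ hy
      rw [Finset.mem_sigma, Finset.mem_filter] at hy
      obtain ⟨⟨-, hiV⟩, hj⟩ := hy
      have hine : i ∉ V.erase j := fun h => hiV (Finset.mem_of_mem_erase h)
      simp only [Finset.erase_insert hine, Finset.insert_erase hj]
    · rintro ⟨U, j⟩ hx
      rw [Finset.mem_sigma, Finset.mem_filter] at hx
      obtain ⟨⟨-, hiU⟩, hj⟩ := hx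
      have hjc : j ∈ Uᶜ := hj
      rw [Finset.mem_compl] at hj
      have hjne : j ∉ U.erase i := fun h => hj (Finset.mem_of_mem_erase h)
      have hic : i ∈ (insert j (U.erase i))ᶜ := by
        rw [Finset.mem_compl]
        intro hmem
        rcases Finset.mem_insert.mp hmem with h | h
        · exact hj (h ▸ hiU)
        · exact (Finset.mem_erase.mp h).1 rfl
      have hcompl : ((insert j (U.erase i))ᶜ).erase i = Uᶜ.erase j := by
        ext x
        simp only [Finset.mem_erase, Finset.mem_compl, Finset.mem_insert, not_or]
        constructor
        · rintro ⟨hxi, hxj, hxU⟩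
          exact ⟨hxj, fun h => hxU ⟨hxi, h⟩⟩
        · rintro ⟨hxj, hxU⟩
          exact ⟨fun h => hxU (h ▸ hiU), hxj, fun h => hxU h.2⟩
      have e1 : (∏ u ∈ U, p u) = p i * ∏ u ∈ U.erase i, p u :=
        (Finset.mul_prod_erase U p hiU).symm
      have e2 : (∏ v ∈ insert j (U.erase i), p v) = p j * ∏ u ∈ U.erase i, p u :=
        Finset.prod_insert hjne
      have e3 : (∏ u ∈ Uᶜ, (1 - p u)) = (1 - p j) * ∏ u ∈ Uᶜ.erase j, (1 - p u) :=
        (Finset.mul_prod_erase Uᶜ _ hjc).symm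
      have e4 : (∏ v ∈ (insert j (U.erase i))ᶜ, (1 - p v))
          = (1 - p i) * ∏ u ∈ Uᶜ.erase j, (1 - p u) := by
        rw [← Finset.mul_prod_erase _ _ hic, hcompl]
      simp only [e1, e2, e3, e4]
      ring
  -- assemble: rewrite key2 into the single-sum form
  have key : (1 - p i) * ∑ U ∈ A.filter (fun U => i ∈ U),
        (∏ u ∈ U, p u) * (∏ u ∈ Uᶜ, (1 - p u)) * (∑ j ∈ Uᶜ, p j)
      = p i * ∑ V ∈ A.filter (fun V => i ∉ V),
        (∏ v ∈ V, p v) * (∏ v ∈ Vᶜ, (1 - p v)) * (∑ j ∈ Vᶜ, p j) := by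
    have swap : ∀ (a b : ℝ) (s : Finset (Fin n)) (f : Fin n → ℝ),
        a * (b * ∑ j ∈ s, f j) = ∑ j ∈ s, a * (f j * b) := by
      intro a b s f
      rw [Finset.mul_sum, Finset.mul_sum]
      exact Finset.sum_congr rfl fun j _ => by ring
    rw [Finset.mul_sum, Finset.mul_sum]
    calc ∑ U ∈ A.filter (fun U => i ∈ U),
          (1 - p i) * ((∏ u ∈ U, p u) * (∏ u ∈ Uᶜ, (1 - p u)) * ∑ j ∈ Uᶜ, p j)
        = ∑ U ∈ A.filter (fun U => i ∈ U), ∑ j ∈ Uᶜ,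
          (1 - p i) * (p j * ((∏ u ∈ U, p u) * (∏ u ∈ Uᶜ, (1 - p u)))) := by
          exact Finset.sum_congr rfl fun U _ => swap _ _ _ _
      _ = ∑ V ∈ A.filter (fun V => i ∉ V), ∑ j ∈ V,
          p i * ((1 - p j) * ((∏ v ∈ V, p v) * (∏ v ∈ Vᶜ, (1 - p v)))) := key2
      _ = ∑ V ∈ A.filter (fun V => i ∉ V),
          p i * ((∏ v ∈ V, p v) * (∏ v ∈ Vᶜ, (1 - p v)) * ∑ j ∈ Vᶜ, p j) := by
          refine Finset.sum_congr rfl fun V hV => ?_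
          rw [hS V (Finset.mem_filter.mp hV).1]
          exact (swap _ _ _ _).symm
  -- now finish
  have hsplit : sumg n k p
      = (∑ U ∈ A.filter (fun U => i ∈ U), gSampford n k U p)
        + ∑ U ∈ A.filter (fun U => i ∉ U), gSampford n k U p := by
    rw [sumg, ← hA, ← Finset.sum_filter_add_sum_filter_not A (fun U => i ∈ U)]
  rw [hsplit]
  have hg : ∀ U : Finset (Fin n), gSampford n k U p
      = (1 / ((n : ℝ) - (k : ℝ))) *
        ((∏ u ∈ U, p u) * (∏ u ∈ Uᶜ, (1 - p u)) * (∑ j ∈ Uᶜ, p j)) := by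
    intro U; rw [gSampford]; ring
  simp only [hg, ← Finset.mul_sum]
  set c : ℝ := 1 / ((n : ℝ) - (k : ℝ))
  set L : ℝ := ∑ U ∈ A.filter (fun U => i ∈ U),
    (∏ u ∈ U, p u) * (∏ u ∈ Uᶜ, (1 - p u)) * (∑ j ∈ Uᶜ, p j)
  set R : ℝ := ∑ V ∈ A.filter (fun V => i ∉ V),
    (∏ v ∈ V, p v) * (∏ v ∈ Vᶜ, (1 - p v)) * (∑ j ∈ Vᶜ, p j)
  linear_combination c * key
end

section
/- Let n, k be integers with 1 ≤ k < n, K = {p ∈ [0,1]^n : Σ_i p_i = k}, and U ⊆ {1,…,n} with |U| = k. Then the function f̄_U : K → [0,1], defined by f̄_U(x) = f_U(x) for x ∈ K not equal to any e_V with |V| = k, f̄_U(e_U) = 1, and f̄_U(e_V) = 0 for V ≠ U with |V| = k, is well-defined (the denominator of f_U is positive at all such x) and continuous on K. -/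
open Finset

open Classical in
/-- The continuous completion `f̄_U` of `f_U = g_U / ∑_V g_V` on `K`. -/
noncomputable def fbar (n k : ℕ) (U : Finset (Fin n)) (x : Fin n → ℝ) : ℝ :=
  if x = eU U then 1
  else if ∃ V : Finset (Fin n), V.card = k ∧ x = eU V then 0
  else gSampford n k U x / sumg n k x

section Aux

variable {n k : ℕ}

lemma eU_inj {A B : Finset (Fin n)} (h : eU A = eU B) : A = B := by
  ext i
  have hi := congrFun h i
  simp only [eU] at hi
  split_ifs at hi with h1 h2 <;> simp_all

lemma gS_nonneg (hkn : k < n) {x : Fin n → ℝ} (hx : ∀ i, 0 ≤ x i ∧ x i ≤ 1)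
    (W : Finset (Fin n)) : 0 ≤ gSampford n k W x := by
  have hc : (0:ℝ) < (n:ℝ) - k := by
    have : (k:ℝ) < n := by exact_mod_cast hkn
    linarith
  have h1 : 0 ≤ ∏ i ∈ W, x i := Finset.prod_nonneg fun i _ => (hx i).1
  have h2 : 0 ≤ ∏ i ∈ Wᶜ, (1 - x i) := Finset.prod_nonneg fun i _ => by linarith [(hx i).2]
  have h3 : 0 ≤ ∑ i ∈ Wᶜ, x i := Finset.sum_nonneg fun i _ => (hx i).1
  have hc' : (0:ℝ) ≤ 1 / ((n:ℝ) - k) := by positivity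
  exact mul_nonneg (mul_nonneg (mul_nonneg hc' h1) h2) h3

lemma gS_le_sumg (hkn : k < n) {x : Fin n → ℝ} (hx : ∀ i, 0 ≤ x i ∧ x i ≤ 1)
    {W : Finset (Fin n)} (hW : W.card = k) : gSampford n k W x ≤ sumg n k x :=
  Finset.single_le_sum (fun V _ => gS_nonneg hkn hx V) (mem_powersetCard_univ.mpr hW)

lemma sum_compl_eq {x : Fin n → ℝ} (hxs : ∑ i, x i = (k:ℝ)) {V : Finset (Fin n)}
    (hV : V.card = k) : ∑ i ∈ Vᶜ, x i = ∑ i ∈ V, (1 - x i) := by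
  have h1 := Finset.sum_add_sum_compl V x
  have h2 : ∑ i ∈ V, (1 - x i) = (V.card : ℝ) - ∑ i ∈ V, x i := by
    rw [Finset.sum_sub_distrib, Finset.sum_const, nsmul_eq_mul, mul_one]
  rw [h2, hV, hxs] at *
  linarith

lemma one_sub_le_s {x : Fin n → ℝ} (hx01 : ∀ i, 0 ≤ x i ∧ x i ≤ 1)
    (hxs : ∑ i, x i = (k:ℝ)) {V : Finset (Fin n)} (hV : V.card = k)
    {j : Fin n} (hj : j ∈ V) : 1 - x j ≤ ∑ i ∈ Vᶜ, x i := by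
  rw [sum_compl_eq hxs hV]
  exact Finset.single_le_sum (f := fun i => 1 - x i) (fun i _ => by linarith [(hx01 i).2]) hj

lemma xm_le_s {x : Fin n → ℝ} (hx01 : ∀ i, 0 ≤ x i ∧ x i ≤ 1)
    {V : Finset (Fin n)} {m : Fin n} (hm : m ∉ V) : x m ≤ ∑ i ∈ Vᶜ, x i :=
  Finset.single_le_sum (fun i _ => (hx01 i).1) (Finset.mem_compl.mpr hm)

/-- If the off-`V` mass vanishes, `x` is the vertex `e_V`. -/
lemma eq_eU_of_s_eq_zero {x : Fin n → ℝ} (hx01 : ∀ i, 0 ≤ x i ∧ x i ≤ 1)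
    (hxs : ∑ i, x i = (k:ℝ)) {V : Finset (Fin n)} (hV : V.card = k)
    (hs : ∑ i ∈ Vᶜ, x i = 0) : x = eU V := by
  have hz : ∀ i ∈ Vᶜ, x i = 0 :=
    (Finset.sum_eq_zero_iff_of_nonneg (fun i _ => (hx01 i).1)).mp hs
  have hs' : ∑ i ∈ V, (1 - x i) = 0 := by rw [← sum_compl_eq hxs hV]; exact hs
  have ho : ∀ i ∈ V, 1 - x i = 0 :=
    (Finset.sum_eq_zero_iff_of_nonneg (fun i _ => by linarith [(hx01 i).2])).mp hs'
  funext i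
  by_cases hi : i ∈ V
  · have := ho i hi; simp [eU, hi]; linarith
  · have := hz i (Finset.mem_compl.mpr hi); simp [eU, hi, this]


/-- The denominator is positive at non-vertex points of `K`. -/
lemma sumg_pos_of_nonvertex (hk : 1 ≤ k) (hkn : k < n) {x : Fin n → ℝ}
    (hx : x ∈ Ksimplex n k)
    (hnv : ∀ V : Finset (Fin n), V.card = k → x ≠ eU V) : 0 < sumg n k x := by
  obtain ⟨hx01, hxs⟩ := hx
  set P := Finset.univ.filter (fun i => 0 < x i) with hP
  set A := Finset.univ.filter (fun i => x i = (1:ℝ)) with hA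
  have hAP : A ⊆ P := by
    intro i hi
    simp only [hA, hP, Finset.mem_filter, Finset.mem_univ, true_and] at *
    rw [hi]; norm_num
  have hsumP : ∑ i ∈ P, x i = (k:ℝ) := by
    rw [← hxs]
    apply Finset.sum_subset (Finset.filter_subset _ _)
    intro i _ hiP
    simp only [hP, Finset.mem_filter, Finset.mem_univ, true_and, not_lt] at hiP
    linarith [(hx01 i).1]
  have hsumA : ∑ i ∈ A, x i = (A.card : ℝ) := by
    rw [Finset.sum_congr rfl (fun i hi => by
      simp only [hA, Finset.mem_filter] at hi; exact hi.2)]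
    simp
  have hPk : (k:ℝ) ≤ P.card := by
    calc (k:ℝ) = ∑ i ∈ P, x i := hsumP.symm
    _ ≤ ∑ _i ∈ P, (1:ℝ) := Finset.sum_le_sum fun i _ => (hx01 i).2
    _ = P.card := by simp
  have hAk : (A.card : ℝ) ≤ k := by
    calc (A.card : ℝ) = ∑ i ∈ A, x i := hsumA.symm
    _ ≤ ∑ i ∈ P, x i := Finset.sum_le_sum_of_subset_of_nonneg hAP (fun i _ _ => (hx01 i).1)
    _ = k := hsumP
  have hAltk : A.card < k := by
    rcases lt_or_eq_of_le (by exact_mod_cast hAk : A.card ≤ k) with h | h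
    · exact h
    · exfalso
      apply hnv A h
      apply eq_eU_of_s_eq_zero hx01 hxs h
      have h1 : ∑ i ∈ A, x i + ∑ i ∈ Aᶜ, x i = (k:ℝ) := by
        rw [Finset.sum_add_sum_compl]; exact hxs
      rw [hsumA, h] at h1
      linarith
  have hkltP : k < P.card := by
    rcases lt_or_eq_of_le (by exact_mod_cast hPk : k ≤ P.card) with h | h
    · exact h
    · exfalso
      apply hnv P h.symm
      funext i
      by_cases hi : i ∈ P
      · have hone : ∀ j ∈ P, x j = 1 := by
          have hz : ∑ j ∈ P, ((1:ℝ) - x j) = 0 := by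
            rw [Finset.sum_sub_distrib, Finset.sum_const, nsmul_eq_mul, mul_one, hsumP, ← h]
            ring
          intro j hj
          have := (Finset.sum_eq_zero_iff_of_nonneg
            (fun j _ => by linarith [(hx01 j).2] : ∀ j ∈ P, 0 ≤ (1:ℝ) - x j)).mp hz j hj
          linarith
        simp [eU, hi, hone i hi]
      · have hx0 : x i = 0 := by
          have hnp : ¬ 0 < x i := by simpa [hP] using hi
          linarith [(hx01 i).1]
        simp [eU, hi, hx0]
  obtain ⟨W, hAW, hWP, hWcard⟩ := Finset.exists_subsuperset_card_eq hAP hAltk.le hkltP.le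
  have hWlt : W.card < P.card := by rw [hWcard]; exact hkltP
  obtain ⟨m, hmP, hmW⟩ : ∃ m ∈ P, m ∉ W := by
    by_contra hcon
    push_neg at hcon
    exact absurd (Finset.card_le_card hcon) (not_le.mpr hWlt)
  have hnk : (0:ℝ) < (n:ℝ) - k := by
    have : (k:ℝ) < n := by exact_mod_cast hkn
    linarith
  have hc : (0:ℝ) < 1 / ((n:ℝ) - k) := by positivity
  have h1 : 0 < ∏ i ∈ W, x i := by
    apply Finset.prod_pos
    intro i hi
    have := hWP hi
    simp only [hP, Finset.mem_filter] at this
    exact this.2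
  have h2 : 0 < ∏ i ∈ Wᶜ, (1 - x i) := by
    apply Finset.prod_pos
    intro i hi
    have hiW : i ∉ W := Finset.mem_compl.mp hi
    have hiA : i ∉ A := fun h => hiW (hAW h)
    simp only [hA, Finset.mem_filter, Finset.mem_univ, true_and] at hiA
    have := (hx01 i).2
    cases lt_or_eq_of_le this with
    | inl h => linarith
    | inr h => exact absurd h hiA
  have h3 : 0 < ∑ i ∈ Wᶜ, x i := by
    have hxm : 0 < x m := by
      simp only [hP, Finset.mem_filter] at hmP; exact hmP.2
    calc (0:ℝ) < x m := hxm
    _ ≤ ∑ i ∈ Wᶜ, x i := xm_le_s hx01 hmW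
  have : 0 < gSampford n k W x := by
    unfold gSampford
    positivity
  exact lt_of_lt_of_le this (gS_le_sumg hkn hx01 hWcard)


/-- Upper bound for the "wrong" terms near the vertex `e_V`. -/
lemma gS_le_sq (hkn : k < n) {x : Fin n → ℝ} (hx01 : ∀ i, 0 ≤ x i ∧ x i ≤ 1)
    (hxs : ∑ i, x i = (k:ℝ)) {V W : Finset (Fin n)} (hV : V.card = k)
    (hW : W.card = k) (hne : W ≠ V) :
    gSampford n k W x ≤ (∑ i ∈ Vᶜ, x i) ^ 2 := by
  set s := ∑ i ∈ Vᶜ, x i with hs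
  have hs0 : 0 ≤ s := Finset.sum_nonneg fun i _ => (hx01 i).1
  -- pick m ∈ W \ V and j ∈ V \ W
  obtain ⟨m, hm⟩ : (W \ V).Nonempty := by
    rw [Finset.sdiff_nonempty]
    intro hsub
    exact hne (Finset.eq_of_subset_of_card_le hsub (by rw [hV, hW]))
  obtain ⟨j, hj⟩ : (V \ W).Nonempty := by
    rw [Finset.sdiff_nonempty]
    intro hsub
    exact hne (Finset.eq_of_subset_of_card_le hsub (by rw [hV, hW])).symm
  rw [Finset.mem_sdiff] at hm hj
  have hnk : (0:ℝ) < (n:ℝ) - k := by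
    have : (k:ℝ) < n := by exact_mod_cast hkn
    linarith
  -- bound the three factors
  have ha : ∏ i ∈ W, x i ≤ s := by
    calc ∏ i ∈ W, x i = x m * ∏ i ∈ W.erase m, x i := (Finset.mul_prod_erase W x hm.1).symm
    _ ≤ x m * 1 := by
        apply mul_le_mul_of_nonneg_left _ (hx01 m).1
        exact Finset.prod_le_one (fun i _ => (hx01 i).1) (fun i _ => (hx01 i).2)
    _ = x m := mul_one _
    _ ≤ s := xm_le_s hx01 hm.2
  have ha0 : 0 ≤ ∏ i ∈ W, x i := Finset.prod_nonneg fun i _ => (hx01 i).1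
  have hb : ∏ i ∈ Wᶜ, (1 - x i) ≤ s := by
    have hjc : j ∈ Wᶜ := Finset.mem_compl.mpr hj.2
    calc ∏ i ∈ Wᶜ, (1 - x i)
        = (1 - x j) * ∏ i ∈ Wᶜ.erase j, (1 - x i) :=
          (Finset.mul_prod_erase _ _ hjc).symm
    _ ≤ (1 - x j) * 1 := by
        apply mul_le_mul_of_nonneg_left _ (by linarith [(hx01 j).2])
        exact Finset.prod_le_one (fun i _ => by linarith [(hx01 i).2])
          (fun i _ => by linarith [(hx01 i).1])
    _ = 1 - x j := mul_one _
    _ ≤ s := one_sub_le_s hx01 hxs hV hj.1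
  have hb0 : 0 ≤ ∏ i ∈ Wᶜ, (1 - x i) :=
    Finset.prod_nonneg fun i _ => by linarith [(hx01 i).2]
  have ht : ∑ i ∈ Wᶜ, x i ≤ (n:ℝ) - k := by
    calc ∑ i ∈ Wᶜ, x i ≤ ∑ _i ∈ Wᶜ, (1:ℝ) := Finset.sum_le_sum fun i _ => (hx01 i).2
    _ = (Wᶜ.card : ℝ) := by simp
    _ = (n:ℝ) - k := by
        rw [Finset.card_compl, hW]
        simp [Nat.cast_sub hkn.le]
  have ht0 : 0 ≤ ∑ i ∈ Wᶜ, x i := Finset.sum_nonneg fun i _ => (hx01 i).1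
  unfold gSampford
  have key : (1 / ((n:ℝ) - k)) * (∏ i ∈ W, x i) * (∏ i ∈ Wᶜ, (1 - x i)) * (∑ i ∈ Wᶜ, x i)
      ≤ (1 / ((n:ℝ) - k)) * (∏ i ∈ W, x i) * (∏ i ∈ Wᶜ, (1 - x i)) * ((n:ℝ) - k) := by
    apply mul_le_mul_of_nonneg_left ht
    positivity
  calc (1 / ((n:ℝ) - k)) * (∏ i ∈ W, x i) * (∏ i ∈ Wᶜ, (1 - x i)) * (∑ i ∈ Wᶜ, x i)
      ≤ (1 / ((n:ℝ) - k)) * (∏ i ∈ W, x i) * (∏ i ∈ Wᶜ, (1 - x i)) * ((n:ℝ) - k) := key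
  _ = (∏ i ∈ W, x i) * (∏ i ∈ Wᶜ, (1 - x i)) := by
      field_simp
  _ ≤ s * s := mul_le_mul ha hb hb0 hs0
  _ = s ^ 2 := (sq s).symm

/-- Lower bound for the dominant term near the vertex `e_V`. -/
lemma gS_ge (hkn : k < n) {x : Fin n → ℝ} (hx01 : ∀ i, 0 ≤ x i ∧ x i ≤ 1)
    (hxs : ∑ i, x i = (k:ℝ)) {V : Finset (Fin n)} (hV : V.card = k)
    (hs : ∑ i ∈ Vᶜ, x i ≤ 1 / (2 * n)) :
    (1 / ((n:ℝ) - k)) * (∑ i ∈ Vᶜ, x i) / 4 ≤ gSampford n k V x := by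
  set s := ∑ i ∈ Vᶜ, x i with hsdef
  have hs0 : 0 ≤ s := Finset.sum_nonneg fun i _ => (hx01 i).1
  have hn1 : (1:ℝ) ≤ n := by
    have : 0 < n := lt_of_le_of_lt (Nat.zero_le k) hkn
    exact_mod_cast this
  have hns : (n:ℝ) * s ≤ 1 / 2 := by
    have hn0 : (0:ℝ) < n := by linarith
    have h := mul_le_mul_of_nonneg_left hs (le_of_lt hn0)
    have he : (n:ℝ) * (1 / (2 * n)) = 1 / 2 := by field_simp
    linarith
  have hshalf : s ≤ 1 / 2 := by nlinarith
  have hpow : (1:ℝ) / 2 ≤ (1 - s) ^ n := by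
    have := one_add_mul_le_pow (a := -s) (by linarith) n
    have h2 : 1 + (n:ℝ) * (-s) ≤ (1 + (-s)) ^ n := this
    have h3 : (1:ℝ) - n * s ≤ (1 - s) ^ n := by
      have e : (1:ℝ) - s = 1 + (-s) := by ring
      rw [e]
      linarith [h2]
    linarith
  have hA : (1:ℝ) / 2 ≤ ∏ i ∈ V, x i := by
    have h1 : (1 - s) ^ n ≤ (1 - s) ^ V.card := by
      apply pow_le_pow_of_le_one (by linarith) (by linarith)
      rw [hV]; exact hkn.le
    have h2 : (1 - s) ^ V.card ≤ ∏ i ∈ V, x i := by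
      rw [← Finset.prod_const]
      apply Finset.prod_le_prod (fun i _ => by linarith)
      intro i hi
      have := one_sub_le_s hx01 hxs hV hi
      linarith
    linarith [hpow]
  have hB : (1:ℝ) / 2 ≤ ∏ i ∈ Vᶜ, (1 - x i) := by
    have h1 : (1 - s) ^ n ≤ (1 - s) ^ Vᶜ.card := by
      apply pow_le_pow_of_le_one (by linarith) (by linarith)
      exact Finset.card_le_univ _ |>.trans_eq (by simp)
    have h2 : (1 - s) ^ Vᶜ.card ≤ ∏ i ∈ Vᶜ, (1 - x i) := by
      rw [← Finset.prod_const]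
      apply Finset.prod_le_prod (fun i _ => by linarith)
      intro i hi
      have := xm_le_s hx01 (Finset.mem_compl.mp hi)
      linarith
    linarith [hpow]
  have hnk : (0:ℝ) < (n:ℝ) - k := by
    have : (k:ℝ) < n := by exact_mod_cast hkn
    linarith
  unfold gSampford
  have hc : (0:ℝ) < 1 / ((n:ℝ) - k) := by positivity
  rw [← hsdef]
  nlinarith [mul_nonneg hc.le hs0, mul_le_mul hA hB (by linarith) (by linarith)]


lemma fbar_eq_div {U : Finset (Fin n)} (hU : U.card = k) {x : Fin n → ℝ}
    (h : ¬∃ V : Finset (Fin n), V.card = k ∧ x = eU V) :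
    fbar n k U x = gSampford n k U x / sumg n k x := by
  unfold fbar
  rw [if_neg (fun hxU => h ⟨U, hU, hxU⟩), if_neg h]

lemma fbar_vertex {U V : Finset (Fin n)} (hU : U.card = k) (hV : V.card = k) :
    fbar n k U (eU V) = if U = V then 1 else 0 := by
  by_cases h : U = V
  · subst h
    unfold fbar
    rw [if_pos rfl, if_pos rfl]
  · unfold fbar
    rw [if_neg (fun he => h (eU_inj he).symm), if_pos ⟨V, hV, rfl⟩, if_neg h]

lemma continuous_gS (W : Finset (Fin n)) : Continuous (gSampford n k W) := by
  unfold gSampford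
  exact ((continuous_const.mul (continuous_finset_prod _ fun i _ => continuous_apply i)).mul
    (continuous_finset_prod _ fun i _ => continuous_const.sub (continuous_apply i))).mul
    (continuous_finset_sum _ fun i _ => continuous_apply i)

lemma continuous_sumg : Continuous (sumg n k) := by
  unfold sumg
  exact continuous_finset_sum _ fun W _ => continuous_gS W

/-- The master estimate near the vertex `e_V`. -/
lemma fbar_estimate (hk : 1 ≤ k) (hkn : k < n) {U V : Finset (Fin n)}
    (hU : U.card = k) (hV : V.card = k) {x : Fin n → ℝ} (hx : x ∈ Ksimplex n k)
    (hs : ∑ i ∈ Vᶜ, x i ≤ 1 / (2 * n)) :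
    |fbar n k U x - (if U = V then 1 else 0)| ≤
      (4 * (((Finset.powersetCard k (Finset.univ : Finset (Fin n))).card : ℝ)) * ((n:ℝ) - k))
        * ∑ i ∈ Vᶜ, x i := by
  obtain ⟨hx01, hxs⟩ := hx
  set s := ∑ i ∈ Vᶜ, x i with hsdef
  set N : ℕ := (Finset.powersetCard k (Finset.univ : Finset (Fin n))).card with hNdef
  set C : ℝ := 4 * (N:ℝ) * ((n:ℝ) - k) with hCdef
  have hs0 : 0 ≤ s := Finset.sum_nonneg fun i _ => (hx01 i).1
  have hnk : (0:ℝ) < (n:ℝ) - k := by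
    have : (k:ℝ) < n := by exact_mod_cast hkn
    linarith
  have hN1 : (1:ℝ) ≤ N := by
    have : V ∈ Finset.powersetCard k (Finset.univ : Finset (Fin n)) :=
      mem_powersetCard_univ.mpr hV
    have := Finset.card_pos.mpr ⟨V, this⟩
    exact_mod_cast this
  have hC0 : (0:ℝ) ≤ C := by
    rw [hCdef]; positivity
  have hn1 : (1:ℝ) ≤ n := by
    have : 0 < n := lt_of_le_of_lt (Nat.zero_le k) hkn
    exact_mod_cast this
  by_cases hvert : ∃ W : Finset (Fin n), W.card = k ∧ x = eU W
  · obtain ⟨W, hW, rfl⟩ := hvert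
    have hWV : W = V := by
      by_contra hne
      obtain ⟨m, hm⟩ : (W \ V).Nonempty := by
        rw [Finset.sdiff_nonempty]
        intro hsub
        exact hne (Finset.eq_of_subset_of_card_le hsub (by rw [hV, hW]))
      rw [Finset.mem_sdiff] at hm
      have h1 : (1:ℝ) ≤ s := by
        have : eU W m ≤ s := by
          apply Finset.single_le_sum (f := fun i => eU W i)
            (fun i _ => by unfold eU; split <;> norm_num)
            (Finset.mem_compl.mpr hm.2)
        simpa [eU, hm.1] using this
      have : s ≤ 1 / 2 := by
        apply hs.trans
        rw [div_le_div_iff₀ (by positivity) (by norm_num)]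
        linarith
      linarith
    subst hWV
    have hsz : s = 0 := by
      rw [hsdef]
      exact Finset.sum_eq_zero fun i hi => by simp [eU, Finset.mem_compl.mp hi]
    rw [fbar_vertex hU hW, hsz, sub_self, abs_zero, mul_zero]
  · have hxne : ∀ W : Finset (Fin n), W.card = k → x ≠ eU W :=
      fun W hW hxe => hvert ⟨W, hW, hxe⟩
    rw [fbar_eq_div hU hvert]
    have hspos : 0 < s := by
      rcases lt_or_eq_of_le hs0 with h | h
      · exact h
      · exact absurd (eq_eU_of_s_eq_zero hx01 hxs hV h.symm) (hxne V hV)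
    have hgV_ge : (1 / ((n:ℝ) - k)) * s / 4 ≤ gSampford n k V x :=
      gS_ge hkn hx01 hxs hV hs
    have hgVle : gSampford n k V x ≤ sumg n k x := gS_le_sumg hkn hx01 hV
    have hSlow : (1 / ((n:ℝ) - k)) * s / 4 ≤ sumg n k x := le_trans hgV_ge hgVle
    have hsum_pos : 0 < sumg n k x := lt_of_lt_of_le (by positivity) hSlow
    have key : (N:ℝ) * s ^ 2 ≤ C * s * sumg n k x := by
      have heq : C * s * ((1 / ((n:ℝ) - k)) * s / 4) = (N:ℝ) * s ^ 2 := by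
        rw [hCdef]; field_simp
      calc (N:ℝ) * s ^ 2 = C * s * ((1 / ((n:ℝ) - k)) * s / 4) := heq.symm
      _ ≤ C * s * sumg n k x := by
          apply mul_le_mul_of_nonneg_left hSlow
          positivity
    have hR : sumg n k x ≤ gSampford n k V x + (N:ℝ) * s ^ 2 := by
      have hmem : V ∈ Finset.powersetCard k (Finset.univ : Finset (Fin n)) :=
        mem_powersetCard_univ.mpr hV
      have hsplit : gSampford n k V x +
          ∑ W ∈ (Finset.powersetCard k (Finset.univ : Finset (Fin n))).erase V,
            gSampford n k W x = sumg n k x := by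
        unfold sumg; exact Finset.add_sum_erase _ (fun W => gSampford n k W x) hmem
      have hbd : ∑ W ∈ (Finset.powersetCard k (Finset.univ : Finset (Fin n))).erase V,
          gSampford n k W x ≤ (N:ℝ) * s ^ 2 := by
        calc ∑ W ∈ (Finset.powersetCard k (Finset.univ : Finset (Fin n))).erase V,
              gSampford n k W x
            ≤ ∑ _W ∈ (Finset.powersetCard k (Finset.univ : Finset (Fin n))).erase V,
              s ^ 2 := by
              apply Finset.sum_le_sum
              intro W hWe
              rw [Finset.mem_erase] at hWe
              exact gS_le_sq hkn hx01 hxs hV (mem_powersetCard_univ.mp hWe.2) hWe.1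
        _ = (((Finset.powersetCard k (Finset.univ : Finset (Fin n))).erase V).card : ℝ)
              * s ^ 2 := by rw [Finset.sum_const, nsmul_eq_mul]
        _ ≤ (N:ℝ) * s ^ 2 := by
              apply mul_le_mul_of_nonneg_right _ (by positivity)
              have hce : ((Finset.powersetCard k (Finset.univ : Finset (Fin n))).erase V).card ≤ N :=
                Finset.card_erase_le
              exact_mod_cast hce
      linarith
    by_cases hUV : U = V
    · subst hUV
      rw [if_pos rfl]
      have habs : gSampford n k U x / sumg n k x - 1 =
          -((sumg n k x - gSampford n k U x) / sumg n k x) := by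
        field_simp
        ring
      rw [habs, abs_neg, abs_of_nonneg (div_nonneg (by linarith) hsum_pos.le),
        div_le_iff₀ hsum_pos]
      have h6 : sumg n k x - gSampford n k U x ≤ (N:ℝ) * s ^ 2 := by linarith
      linarith [key]
    · rw [if_neg hUV, sub_zero]
      have hgU_le : gSampford n k U x ≤ s ^ 2 := gS_le_sq hkn hx01 hxs hV hU hUV
      have h0 : 0 ≤ gSampford n k U x := gS_nonneg hkn hx01 U
      rw [abs_of_nonneg (div_nonneg h0 hsum_pos.le), div_le_iff₀ hsum_pos]
      have hNs : s ^ 2 ≤ (N:ℝ) * s ^ 2 := by nlinarith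
      linarith [key]

end Aux

theorem stmt12 (n k : ℕ) (hk : 1 ≤ k) (hkn : k < n)
    (U : Finset (Fin n)) (hU : U.card = k) :
    (∀ x ∈ Ksimplex n k, (∀ V : Finset (Fin n), V.card = k → x ≠ eU V) →
      0 < sumg n k x) ∧
    (∀ x ∈ Ksimplex n k, fbar n k U x ∈ Set.Icc (0 : ℝ) 1) ∧
    ContinuousOn (fbar n k U) (Ksimplex n k) := by
  refine ⟨fun x hx hnv => sumg_pos_of_nonvertex hk hkn hx hnv, ?_, ?_⟩
  · intro x hx
    by_cases hvert : ∃ V : Finset (Fin n), V.card = k ∧ x = eU V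
    · obtain ⟨V, hV, rfl⟩ := hvert
      rw [fbar_vertex hU hV]
      split <;> norm_num
    · rw [fbar_eq_div hU hvert]
      have hxne : ∀ V : Finset (Fin n), V.card = k → x ≠ eU V :=
        fun V hV h => hvert ⟨V, hV, h⟩
      have hpos := sumg_pos_of_nonvertex hk hkn hx hxne
      have h0 : 0 ≤ gSampford n k U x := gS_nonneg hkn hx.1 U
      have hle : gSampford n k U x ≤ sumg n k x := gS_le_sumg hkn hx.1 hU
      exact ⟨div_nonneg h0 hpos.le, (div_le_one hpos).mpr hle⟩
  · intro x hx
    by_cases hvert : ∃ V : Finset (Fin n), V.card = k ∧ x = eU V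
    · obtain ⟨V, hV, rfl⟩ := hvert
      have hval : fbar n k U (eU V) = (if U = V then (1:ℝ) else 0) := fbar_vertex hU hV
      have hn0 : (0:ℝ) < n := by
        have : 0 < n := lt_of_le_of_lt (Nat.zero_le k) hkn
        exact_mod_cast this
      have hscont : Continuous (fun y : Fin n → ℝ => ∑ i ∈ Vᶜ, y i) :=
        continuous_finset_sum _ fun i _ => continuous_apply i
      have hs0 : (∑ i ∈ Vᶜ, eU V i) = 0 :=
        Finset.sum_eq_zero fun i hi => by simp [eU, Finset.mem_compl.mp hi]
      have hUopen : IsOpen {y : Fin n → ℝ | ∑ i ∈ Vᶜ, y i < 1 / (2 * n)} :=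
        isOpen_lt hscont continuous_const
      have hmemU : eU V ∈ {y : Fin n → ℝ | ∑ i ∈ Vᶜ, y i < 1 / (2 * n)} := by
        simp only [Set.mem_setOf_eq, hs0]
        positivity
      have htend : Filter.Tendsto
          (fun y => fbar n k U y - (if U = V then (1:ℝ) else 0))
          (nhdsWithin (eU V) (Ksimplex n k)) (nhds 0) := by
        apply squeeze_zero_norm'
          (a := fun y => (4 * (((Finset.powersetCard k (Finset.univ : Finset (Fin n))).card : ℝ))
            * ((n:ℝ) - k)) * ∑ i ∈ Vᶜ, y i)
        · have h1 : ∀ᶠ y in nhdsWithin (eU V) (Ksimplex n k),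
              y ∈ {y : Fin n → ℝ | ∑ i ∈ Vᶜ, y i < 1 / (2 * n)} :=
            mem_nhdsWithin_of_mem_nhds (hUopen.mem_nhds hmemU)
          have h2 : ∀ᶠ y in nhdsWithin (eU V) (Ksimplex n k), y ∈ Ksimplex n k :=
            eventually_mem_nhdsWithin
          filter_upwards [h1, h2] with y hy1 hy2
          rw [Real.norm_eq_abs]
          exact fbar_estimate hk hkn hU hV hy2 hy1.le
        · have h3 : Filter.Tendsto (fun y : Fin n → ℝ =>
              (4 * (((Finset.powersetCard k (Finset.univ : Finset (Fin n))).card : ℝ))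
                * ((n:ℝ) - k)) * ∑ i ∈ Vᶜ, y i) (nhds (eU V))
              (nhds ((4 * (((Finset.powersetCard k (Finset.univ : Finset (Fin n))).card : ℝ))
                * ((n:ℝ) - k)) * ∑ i ∈ Vᶜ, eU V i)) :=
            (continuous_const.mul hscont).tendsto (eU V)
          rw [hs0, mul_zero] at h3
          exact h3.mono_left nhdsWithin_le_nhds
      have htend2 : Filter.Tendsto (fbar n k U) (nhdsWithin (eU V) (Ksimplex n k))
          (nhds (if U = V then (1:ℝ) else 0)) := by
        have h := htend.add (tendsto_const_nhds
          (x := (if U = V then (1:ℝ) else 0))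
          (f := nhdsWithin (eU V) (Ksimplex n k)))
        simpa using h
      show Filter.Tendsto (fbar n k U) (nhdsWithin (eU V) (Ksimplex n k))
        (nhds (fbar n k U (eU V)))
      rw [hval]
      exact htend2
    · have hxne : ∀ V : Finset (Fin n), V.card = k → x ≠ eU V :=
        fun V hV h => hvert ⟨V, hV, h⟩
      have hpos := sumg_pos_of_nonvertex hk hkn hx hxne
      have hcont : ContinuousWithinAt
          (fun y => gSampford n k U y / sumg n k y) (Ksimplex n k) x :=
        (((continuous_gS U).continuousAt).div
          ((continuous_sumg).continuousAt) hpos.ne').continuousWithinAt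
      apply hcont.congr_of_eventuallyEq ?_ (fbar_eq_div hU hvert)
      have hfin : ({y : Fin n → ℝ | ∃ V : Finset (Fin n), V.card = k ∧ y = eU V}).Finite := by
        apply Set.Finite.subset (Set.finite_range (eU (n := n)))
        rintro y ⟨V, _, rfl⟩
        exact ⟨V, rfl⟩
      have hop : IsOpen ({y : Fin n → ℝ | ∃ V : Finset (Fin n), V.card = k ∧ y = eU V})ᶜ :=
        hfin.isClosed.isOpen_compl
      have h1 : ∀ᶠ y in nhdsWithin x (Ksimplex n k),
          y ∈ ({y : Fin n → ℝ | ∃ V : Finset (Fin n), V.card = k ∧ y = eU V})ᶜ :=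
        mem_nhdsWithin_of_mem_nhds (hop.mem_nhds hvert)
      filter_upwards [h1] with y hy
      exact fbar_eq_div hU hy
end

section
/- Let n, k be integers with 1 ≤ k < n, K = {p ∈ [0,1]^n : Σ_i p_i = k}, and U ⊆ {1,…,n} with |U| = k. Then for every p ∈ K and every V ⊆ {1,…,n} with |V| = k: g_V(p) ≤ k · Σ_{i∉U} p_i. -/
open Finset

theorem stmt13 (n k : ℕ) (hk : 1 ≤ k) (hkn : k < n)
    (U : Finset (Fin n)) (hU : U.card = k) :
    ∀ p ∈ Ksimplex n k, ∀ V : Finset (Fin n), V.card = k →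
      gSampford n k V p ≤ (k : ℝ) * ∑ i ∈ Uᶜ, p i := by
  rintro p ⟨hp01, hpsum⟩ V hV
  set S := ∑ i ∈ Uᶜ, p i with hS
  have hS0 : 0 ≤ S := Finset.sum_nonneg fun i _ => (hp01 i).1
  have hnk : (1:ℝ) ≤ (n:ℝ) - k := by
    have : (k:ℝ) + 1 ≤ n := by exact_mod_cast hkn
    linarith
  have hc : 1/((n:ℝ) - k) ≤ 1 := by
    rw [div_le_one (by linarith)]; linarith
  have hc0 : 0 ≤ 1/((n:ℝ)-k) := by positivity
  have hA0 : ∀ W : Finset (Fin n), 0 ≤ ∏ i ∈ W, p i :=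
    fun W => Finset.prod_nonneg fun i _ => (hp01 i).1
  have hA1 : ∀ W : Finset (Fin n), ∏ i ∈ W, p i ≤ 1 :=
    fun W => Finset.prod_le_one (fun i _ => (hp01 i).1) (fun i _ => (hp01 i).2)
  have hB0 : ∀ W : Finset (Fin n), 0 ≤ ∏ i ∈ W, (1 - p i) :=
    fun W => Finset.prod_nonneg fun i _ => by linarith [(hp01 i).2]
  have hB1 : ∀ W : Finset (Fin n), ∏ i ∈ W, (1 - p i) ≤ 1 :=
    fun W => Finset.prod_le_one (fun i _ => by linarith [(hp01 i).2])
      (fun i _ => by linarith [(hp01 i).1])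
  have hSV0 : 0 ≤ ∑ i ∈ Vᶜ, p i := Finset.sum_nonneg fun i _ => (hp01 i).1
  have hsplitV : ∑ i ∈ V, p i + ∑ i ∈ Vᶜ, p i = (k:ℝ) := by
    rw [Finset.sum_add_sum_compl]; exact hpsum
  have hSVk : ∑ i ∈ Vᶜ, p i ≤ (k:ℝ) := by
    have h2 : 0 ≤ ∑ i ∈ V, p i := Finset.sum_nonneg fun i _ => (hp01 i).1
    linarith
  have hk1 : (1:ℝ) ≤ k := by exact_mod_cast hk
  by_cases hUV : V = U
  · subst hUV
    unfold gSampford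
    have h1 : (1/((n:ℝ)-k)) * (∏ i ∈ V, p i) * (∏ i ∈ Vᶜ, (1 - p i)) * (∑ i ∈ Vᶜ, p i)
        ≤ 1 * 1 * 1 * (∑ i ∈ Vᶜ, p i) := by
      gcongr
      all_goals first | exact hc | exact hA0 V | exact hA1 V | exact hB0 V | exact hB1 V | exact hB0 Vᶜ | exact hB1 Vᶜ
    have : (1:ℝ) * 1 * 1 * (∑ i ∈ Vᶜ, p i) ≤ k * ∑ i ∈ Vᶜ, p i := by
      nlinarith
    linarith
  · have hne : (U \ V).Nonempty := by
      rw [Finset.sdiff_nonempty]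
      intro hsub
      exact hUV (Finset.eq_of_subset_of_card_le hsub (by rw [hU, hV])).symm
    obtain ⟨i, hi⟩ := hne
    have hiU : i ∈ U := (Finset.mem_sdiff.mp hi).1
    have hiV : i ∉ V := (Finset.mem_sdiff.mp hi).2
    have hiVc : i ∈ Vᶜ := Finset.mem_compl.mpr hiV
    -- 1 - p i ≤ S
    have hsplitU : ∑ j ∈ U, p j + S = (k:ℝ) := by
      rw [hS, Finset.sum_add_sum_compl]; exact hpsum
    have hUerase : ∑ j ∈ U, p j = p i + ∑ j ∈ U.erase i, p j :=
      (Finset.add_sum_erase U p hiU).symm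
    have hcard : ((U.erase i).card : ℝ) = (k:ℝ) - 1 := by
      rw [Finset.card_erase_of_mem hiU, hU]
      push_cast [Nat.cast_sub hk]
      ring
    have hUeraseLe : ∑ j ∈ U.erase i, p j ≤ (k:ℝ) - 1 := by
      calc ∑ j ∈ U.erase i, p j ≤ (U.erase i).card • (1:ℝ) :=
            Finset.sum_le_card_nsmul _ _ 1 (fun j _ => (hp01 j).2)
        _ = ((U.erase i).card : ℝ) := by simp
        _ = (k:ℝ) - 1 := hcard
    have hkey : 1 - p i ≤ S := by linarith
    have hBle : ∏ j ∈ Vᶜ, (1 - p j) ≤ 1 - p i := by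
      rw [← Finset.mul_prod_erase _ _ hiVc]
      have : ∏ j ∈ (Vᶜ).erase i, (1 - p j) ≤ 1 := hB1 _
      nlinarith [hB0 ((Vᶜ).erase i), (hp01 i).1, (hp01 i).2]
    unfold gSampford
    calc (1/((n:ℝ)-k)) * (∏ j ∈ V, p j) * (∏ j ∈ Vᶜ, (1 - p j)) * (∑ j ∈ Vᶜ, p j)
        ≤ 1 * 1 * (∏ j ∈ Vᶜ, (1 - p j)) * (∑ j ∈ Vᶜ, p j) := by
          gcongr
          all_goals first | exact hc | exact hA0 V | exact hA1 V | exact hB0 V | exact hB1 V | exact hB0 Vᶜ | exact hB1 Vᶜ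
      _ = (∏ j ∈ Vᶜ, (1 - p j)) * (∑ j ∈ Vᶜ, p j) := by ring
      _ ≤ (1 - p i) * (∑ j ∈ Vᶜ, p j) := by
          exact mul_le_mul_of_nonneg_right hBle hSV0
      _ ≤ S * k := mul_le_mul hkey hSVk hSV0 hS0
      _ = k * S := by ring
end

section
/- Let n, k be integers with 1 ≤ k < n, K = {p ∈ [0,1]^n : Σ_i p_i = k}, and U ⊆ {1,…,n} with |U| = k. Then for every p ∈ K: f̄_U(p) ≥ (1/((n−k)·k·C(n,k))) · (∏_{i∈U} p_i) · (∏_{i∉U} (1−p_i)), where C(n,k) is the binomial coefficient n choose k. -/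
open Finset

lemma g_nonneg' {n k : ℕ} (hkn : k < n) (V : Finset (Fin n)) (p : Fin n → ℝ)
    (h01 : ∀ i, 0 ≤ p i ∧ p i ≤ 1) : 0 ≤ gSampford n k V p := by
  have hnk : (0:ℝ) < (n:ℝ) - k := by
    have : (k:ℝ) < n := by exact_mod_cast hkn
    linarith
  unfold gSampford
  have h1 : (0:ℝ) ≤ 1 / ((n:ℝ) - k) := by positivity
  have h2 : (0:ℝ) ≤ ∏ i ∈ V, p i := Finset.prod_nonneg fun i _ => (h01 i).1
  have h3 : (0:ℝ) ≤ ∏ i ∈ Vᶜ, (1 - p i) :=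
    Finset.prod_nonneg fun i _ => by linarith [(h01 i).2]
  have h4 : (0:ℝ) ≤ ∑ i ∈ Vᶜ, p i := Finset.sum_nonneg fun i _ => (h01 i).1
  positivity

lemma g_le' {n k : ℕ} (hk : 1 ≤ k) (hkn : k < n) (U V : Finset (Fin n))
    (hU : U.card = k) (hV : V.card = k) (p : Fin n → ℝ)
    (h01 : ∀ i, 0 ≤ p i ∧ p i ≤ 1) (hsum : ∑ i, p i = (k:ℝ)) :
    gSampford n k V p ≤ (k : ℝ) * (∑ i ∈ Uᶜ, p i) / ((n:ℝ) - k) := by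
  have hnk : (0:ℝ) < (n:ℝ) - k := by
    have : (k:ℝ) < n := by exact_mod_cast hkn
    linarith
  have hk1 : (1:ℝ) ≤ k := by exact_mod_cast hk
  have hPV0 : (0:ℝ) ≤ ∏ i ∈ V, p i := Finset.prod_nonneg fun i _ => (h01 i).1
  have hPV1 : (∏ i ∈ V, p i) ≤ 1 :=
    Finset.prod_le_one (fun i _ => (h01 i).1) (fun i _ => (h01 i).2)
  have hQV0 : (0:ℝ) ≤ ∏ i ∈ Vᶜ, (1 - p i) :=
    Finset.prod_nonneg fun i _ => by linarith [(h01 i).2]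
  have hQV1 : (∏ i ∈ Vᶜ, (1 - p i)) ≤ 1 :=
    Finset.prod_le_one (fun i _ => by linarith [(h01 i).2]) (fun i _ => by linarith [(h01 i).1])
  have hSV0 : (0:ℝ) ≤ ∑ i ∈ Vᶜ, p i := Finset.sum_nonneg fun i _ => (h01 i).1
  have hSVk : (∑ i ∈ Vᶜ, p i) ≤ (k:ℝ) := by
    rw [← hsum]
    exact Finset.sum_le_sum_of_subset_of_nonneg (Finset.subset_univ _)
      (fun i _ _ => (h01 i).1)
  have hS0 : (0:ℝ) ≤ ∑ i ∈ Uᶜ, p i := Finset.sum_nonneg fun i _ => (h01 i).1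
  have key : (∏ i ∈ V, p i) * (∏ i ∈ Vᶜ, (1 - p i)) * (∑ i ∈ Vᶜ, p i)
      ≤ (k:ℝ) * (∑ i ∈ Uᶜ, p i) := by
    by_cases hVU : V = U
    · subst hVU
      have h1 : (∏ i ∈ V, p i) * (∏ i ∈ Vᶜ, (1 - p i)) ≤ 1 := by
        calc (∏ i ∈ V, p i) * (∏ i ∈ Vᶜ, (1 - p i)) ≤ 1 * 1 := by
              apply mul_le_mul hPV1 hQV1 hQV0 (by norm_num)
          _ = 1 := by ring
      calc (∏ i ∈ V, p i) * (∏ i ∈ Vᶜ, (1 - p i)) * (∑ i ∈ Vᶜ, p i)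
          ≤ 1 * (∑ i ∈ Vᶜ, p i) := mul_le_mul_of_nonneg_right h1 hSV0
        _ = (∑ i ∈ Vᶜ, p i) := one_mul _
        _ ≤ (k:ℝ) * (∑ i ∈ Vᶜ, p i) := le_mul_of_one_le_left hSV0 hk1
    · obtain ⟨j, hjV, hjU⟩ : ∃ j ∈ V, j ∉ U := by
        by_contra hc
        push_neg at hc
        exact hVU (Finset.eq_of_subset_of_card_le hc (by rw [hU, hV]))
      have hPVj : (∏ i ∈ V, p i) ≤ p j := by
        rw [← Finset.mul_prod_erase V p hjV]
        calc p j * ∏ i ∈ V.erase j, p i ≤ p j * 1 := by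
              apply mul_le_mul_of_nonneg_left _ (h01 j).1
              exact Finset.prod_le_one (fun i _ => (h01 i).1) (fun i _ => (h01 i).2)
          _ = p j := mul_one _
      have hjS : p j ≤ ∑ i ∈ Uᶜ, p i :=
        Finset.single_le_sum (fun i _ => (h01 i).1) (Finset.mem_compl.mpr hjU)
      calc (∏ i ∈ V, p i) * (∏ i ∈ Vᶜ, (1 - p i)) * (∑ i ∈ Vᶜ, p i)
          ≤ (∏ i ∈ V, p i) * 1 * (k:ℝ) := by
            apply mul_le_mul _ hSVk hSV0 (by positivity)
            exact mul_le_mul_of_nonneg_left hQV1 hPV0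
        _ = (k:ℝ) * (∏ i ∈ V, p i) := by ring
        _ ≤ (k:ℝ) * (∑ i ∈ Uᶜ, p i) := by
            apply mul_le_mul_of_nonneg_left _ (by positivity)
            exact le_trans hPVj hjS
  have hrepr : gSampford n k V p
      = ((∏ i ∈ V, p i) * (∏ i ∈ Vᶜ, (1 - p i)) * (∑ i ∈ Vᶜ, p i)) / ((n:ℝ) - k) := by
    unfold gSampford; ring
  rw [hrepr]
  gcongr

theorem stmt14 (n k : ℕ) (hk : 1 ≤ k) (hkn : k < n)
    (U : Finset (Fin n)) (hU : U.card = k) :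
    ∀ p ∈ Ksimplex n k,
      (1 / (((n : ℝ) - (k : ℝ)) * (k : ℝ) * (n.choose k : ℝ))) *
          (∏ i ∈ U, p i) * (∏ i ∈ Uᶜ, (1 - p i))
        ≤ fbar n k U p := by
  intro p hp
  obtain ⟨h01, hsum⟩ := hp
  have hnk : (0:ℝ) < (n:ℝ) - k := by
    have : (k:ℝ) < n := by exact_mod_cast hkn
    linarith
  have hnk1 : (1:ℝ) ≤ (n:ℝ) - k := by
    have : (k:ℝ) + 1 ≤ n := by exact_mod_cast hkn
    linarith
  have hk1 : (1:ℝ) ≤ (k:ℝ) := by exact_mod_cast hk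
  have hC1 : (1:ℝ) ≤ (n.choose k : ℝ) := by
    exact_mod_cast Nat.succ_le_of_lt (Nat.choose_pos (le_of_lt hkn))
  set P := ∏ i ∈ U, p i with hPdef
  set Q := ∏ i ∈ Uᶜ, (1 - p i) with hQdef
  set S := ∑ i ∈ Uᶜ, p i with hSdef
  have hP0 : 0 ≤ P := Finset.prod_nonneg fun i _ => (h01 i).1
  have hP1 : P ≤ 1 := Finset.prod_le_one (fun i _ => (h01 i).1) (fun i _ => (h01 i).2)
  have hQ0 : 0 ≤ Q := Finset.prod_nonneg fun i _ => by linarith [(h01 i).2]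
  have hQ1 : Q ≤ 1 := Finset.prod_le_one (fun i _ => by linarith [(h01 i).2])
    (fun i _ => by linarith [(h01 i).1])
  have hS0 : 0 ≤ S := Finset.sum_nonneg fun i _ => (h01 i).1
  have hD : (0:ℝ) < ((n:ℝ) - k) * k * (n.choose k : ℝ) := by positivity
  have hsg0 : 0 ≤ sumg n k p :=
    Finset.sum_nonneg fun V _ => g_nonneg' hkn V p h01
  unfold fbar
  split_ifs with h1 h2
  · -- p = eU U : bound by 1
    have hc1 : 1 / (((n:ℝ) - k) * k * (n.choose k : ℝ)) ≤ 1 := by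
      rw [div_le_one hD]
      have h2 : (1:ℝ) ≤ ((n:ℝ) - k) * k := by nlinarith
      nlinarith
    calc 1 / (((n:ℝ) - k) * k * (n.choose k : ℝ)) * P * Q
        ≤ 1 / (((n:ℝ) - k) * k * (n.choose k : ℝ)) * 1 * 1 := by
          apply mul_le_mul _ hQ1 hQ0 (by positivity)
          exact mul_le_mul_of_nonneg_left hP1 (by positivity)
      _ = 1 / (((n:ℝ) - k) * k * (n.choose k : ℝ)) := by ring
      _ ≤ 1 := hc1
  · -- p = eU V, V ≠ U : LHS is 0
    obtain ⟨V, hVk, hpV⟩ := h2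
    have hVU : V ≠ U := fun h => h1 (by rw [hpV, h])
    obtain ⟨j, hjU, hjV⟩ : ∃ j ∈ U, j ∉ V := by
      by_contra hc
      push_neg at hc
      exact hVU (Finset.eq_of_subset_of_card_le hc (by rw [hU, hVk])).symm
    have hPz : P = 0 := by
      apply Finset.prod_eq_zero hjU
      rw [hpV]
      simp [eU, hjV]
    rw [mul_assoc, hPz]
    simp
  · -- generic point
    by_cases hPQ : 0 < P * Q
    · have hSpos : 0 < S := by
        rcases hS0.lt_or_eq with h | h
        · exact h
        · exfalso
          apply h1
          have hz : ∀ i ∈ Uᶜ, p i = 0 := by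
            intro i hi
            exact (Finset.sum_eq_zero_iff_of_nonneg (fun i _ => (h01 i).1)).mp h.symm i hi
          have hsplit : (∑ i ∈ U, p i) + S = (k:ℝ) := by
            rw [hSdef, Finset.sum_add_sum_compl, hsum]
          have hsumU : ∑ i ∈ U, p i = (k:ℝ) := by linarith [h.symm]
          have hone : ∀ i ∈ U, p i = 1 := by
            by_contra hc
            push_neg at hc
            obtain ⟨j, hj, hj1⟩ := hc
            have hlt : p j < 1 := lt_of_le_of_ne (h01 j).2 hj1
            have : ∑ i ∈ U, p i < ∑ i ∈ U, (1:ℝ) :=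
              Finset.sum_lt_sum (fun i _ => (h01 i).2) ⟨j, hj, hlt⟩
            rw [Finset.sum_const, hU, nsmul_eq_mul, mul_one] at this
            linarith
          funext i
          by_cases hi : i ∈ U
          · simp [eU, hi, hone i hi]
          · simp [eU, hi, hz i (Finset.mem_compl.mpr hi)]
      have hgU : gSampford n k U p = 1 / ((n:ℝ) - k) * (P * Q * S) := by
        unfold gSampford; ring
      have hgUpos : 0 < gSampford n k U p := by
        rw [hgU]; positivity
      have hsgpos : 0 < sumg n k p := by
        apply lt_of_lt_of_le hgUpos
        unfold sumg
        apply Finset.single_le_sum (fun V _ => g_nonneg' hkn V p h01)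
        rw [Finset.mem_powersetCard_univ]
        exact hU
      rw [le_div_iff₀ hsgpos]
      have hsum_le : sumg n k p ≤ (n.choose k : ℝ) * ((k:ℝ) * S / ((n:ℝ) - k)) := by
        unfold sumg
        calc ∑ V ∈ Finset.powersetCard k (Finset.univ : Finset (Fin n)), gSampford n k V p
            ≤ ∑ V ∈ Finset.powersetCard k (Finset.univ : Finset (Fin n)),
                ((k:ℝ) * S / ((n:ℝ) - k)) := by
              apply Finset.sum_le_sum
              intro V hV
              exact g_le' hk hkn U V hU (Finset.mem_powersetCard_univ.mp hV) p h01 hsum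
          _ = (n.choose k : ℝ) * ((k:ℝ) * S / ((n:ℝ) - k)) := by
              rw [Finset.sum_const, nsmul_eq_mul, Finset.card_powersetCard,
                Finset.card_univ, Fintype.card_fin]
      have hcoef : 0 ≤ 1 / (((n:ℝ) - k) * k * (n.choose k : ℝ)) * P * Q := by positivity
      calc 1 / (((n:ℝ) - k) * k * (n.choose k : ℝ)) * P * Q * sumg n k p
          ≤ 1 / (((n:ℝ) - k) * k * (n.choose k : ℝ)) * P * Q *
              ((n.choose k : ℝ) * ((k:ℝ) * S / ((n:ℝ) - k))) :=
            mul_le_mul_of_nonneg_left hsum_le hcoef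
        _ = P * Q * S / (((n:ℝ) - k) * ((n:ℝ) - k)) := by
            field_simp
        _ ≤ P * Q * S / ((n:ℝ) - k) := by
            apply div_le_div_of_nonneg_left (by positivity) hnk
            nlinarith
        _ = gSampford n k U p := by rw [hgU]; ring
    · have hPQ0 : P * Q = 0 := le_antisymm (not_lt.mp hPQ) (mul_nonneg hP0 hQ0)
      rw [mul_assoc, hPQ0, mul_zero]
      exact div_nonneg (g_nonneg' hkn U p h01) hsg0
end
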